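/- arXiv:2206.12135 — 2 statements merged into one kernel-verified Lean document; each statement's English description precedes it below -/
import Mathlib

section
/- There exists a first-order sentence φ over the vocabulary consisting of one constant symbol a and one ternary relation symbol R with the following property: letting g(n) denote the number of interpretations of R on the universe [n] = {1,…,n} that satisfy φ when the constant a is interpreted as the fixed element n, one has g(n) = 0 for every n that is not a power of 2, and g(n) ≡ 1 (mod 2) whenever n = 2^m for some m ∈ ℕ. In particular, n ↦ g(n) mod 2 is not ultimately periodic, so g is not MC-finite. -/
open FirstOrder Language

/-- A purely relational language with relation symbols `Rel k` of arity `k`. -/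
def relLang (Rel : ℕ → Type) : Language :=
  ⟨fun _ => Empty, Rel⟩

/-- A language with constant symbols indexed by `Fin ℓ`, relation symbols `Rel k`
of arity `k`, and no other non-logical symbols. -/
def cLang (ℓ : ℕ) (Rel : ℕ → Type) : Language :=
  ⟨fun k => match k with | 0 => Fin ℓ | _ + 1 => Empty, Rel⟩

/-- The `relLang Rel`-structure on `M` determined by an interpretation `S`
of the relation symbols. -/
def relLang.mkStructure {Rel : ℕ → Type} {M : Type}
    (S : ∀ k, Rel k → (Fin k → M) → Prop) : (relLang Rel).Structure M where
  funMap := fun f _ => f.elim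
  RelMap := fun {k} r v => S k r v

/-- The `cLang ℓ Rel`-structure on `M` determined by an interpretation `c` of the
constant symbols and an interpretation `S` of the relation symbols. -/
def cLang.mkStructure {ℓ : ℕ} {Rel : ℕ → Type} {M : Type}
    (c : Fin ℓ → M) (S : ∀ k, Rel k → (Fin k → M) → Prop) :
    (cLang ℓ Rel).Structure M where
  funMap := fun {k} f _ =>
    match k, f with
    | 0, i => c i
  RelMap := fun {k} r v => S k r v

/-- `Sp_φ(n)`: the number of interpretations of the relation symbols on `[n]`
satisfying the sentence `φ` of a relational language. -/
noncomputable def spCount {Rel : ℕ → Type} (φ : (relLang Rel).Sentence) (n : ℕ) : ℕ :=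
  Nat.card { S : ∀ k, Rel k → (Fin k → Fin n) → Prop //
    letI := relLang.mkStructure S
    Fin n ⊨ φ }

/-- `f_φ(n)`: the number of interpretations of the relation symbols on `[n + ℓ]`
satisfying `φ`, where the `i`-th (hard-wired) constant is interpreted as `n + i`. -/
noncomputable def fCount (ℓ : ℕ) {Rel : ℕ → Type} (φ : (cLang ℓ Rel).Sentence) (n : ℕ) : ℕ :=
  Nat.card { S : ∀ k, Rel k → (Fin k → Fin (n + ℓ)) → Prop //
    letI := cLang.mkStructure (fun i => Fin.natAdd n i) S
    Fin (n + ℓ) ⊨ φ }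

/-- Relation symbols: `z` nullary, `u` unary, `b` binary, none of higher arity. -/
def rels012 (z u b : ℕ) : ℕ → Type := fun k =>
  match k with
  | 0 => Fin z
  | 1 => Fin u
  | 2 => Fin b
  | _ => Empty

/-- A sequence is MC-finite iff for every m ≥ 2 it is ultimately periodic modulo m. -/
def MCFinite (s : ℕ → ℕ) : Prop :=
  ∀ m : ℕ, 2 ≤ m → ∃ r p : ℕ, 1 ≤ p ∧ ∀ n : ℕ, r ≤ n → s (n + p) ≡ s n [MOD m]

/-- The vocabulary with a single ternary relation symbol (and nothing else). -/
def rels3 : ℕ → Type := fun k =>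
  match k with
  | 3 => Fin 1
  | _ => Empty

/-- `g φ n`: the number of interpretations of the single ternary relation symbol on the
universe [n] = Fin n that satisfy φ when the constant symbol is interpreted as the fixed
element n (the last element of [n]).  (We count pairs of a relation interpretation and a
constant interpretation whose value is pinned to be n, which is the same count.) -/
noncomputable def gCount (φ : (cLang 1 rels3).Sentence) (n : ℕ) : ℕ :=
  Nat.card { p : (∀ k, rels3 k → (Fin k → Fin n) → Prop) × (Fin 1 → Fin n) //
    ((p.2 0 : ℕ) + 1 = n) ∧
    (letI := cLang.mkStructure p.2 p.1
     Fin n ⊨ φ) }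


namespace FirstOrder.Language.Formula

variable {L : Language} {α β γ : Type}

/-- quantify universally over the `Sum.inr` variables after relabelling by `f` -/
noncomputable def iAllsO [Finite γ] (f : α → β ⊕ γ) (φ : L.Formula α) : L.Formula β :=
  (φ.relabel f).iAlls γ

/-- quantify existentially over the `Sum.inr` variables after relabelling by `f` -/
noncomputable def iExsO [Finite γ] (f : α → β ⊕ γ) (φ : L.Formula α) : L.Formula β :=
  (φ.relabel f).iExs γ

theorem realize_iAllsO [Finite γ] {M : Type} [L.Structure M] {f : α → β ⊕ γ}
    {φ : L.Formula α} {v : β → M} :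
    (iAllsO f φ).Realize v ↔ ∀ i : γ → M, φ.Realize (fun a => Sum.elim v i (f a)) := by
  rw [iAllsO, FirstOrder.Language.Formula.realize_iAlls]
  simp only [realize_relabel]
  rfl

theorem realize_iExsO [Finite γ] {M : Type} [L.Structure M] {f : α → β ⊕ γ}
    {φ : L.Formula α} {v : β → M} :
    (iExsO f φ).Realize v ↔ ∃ i : γ → M, φ.Realize (fun a => Sum.elim v i (f a)) := by
  rw [iExsO, FirstOrder.Language.Formula.realize_iExs]
  simp only [realize_relabel]
  rfl

end FirstOrder.Language.Formula

namespace TernaryCE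

variable {X : Type}

/-- `sub r s` : the relation `r` is contained in `s`. -/
def sub (r s : X → X → Prop) : Prop := ∀ u v, r u v → s u v

lemma sub_rfl {r : X → X → Prop} : sub r r := fun _ _ h => h

lemma sub_trans {r s t : X → X → Prop} (h1 : sub r s) (h2 : sub s t) : sub r t :=
  fun u v h => h2 u v (h1 u v h)

/-- the relation has exactly (at most, here) two classes, with a witness pair. -/
def twoCls (r : X → X → Prop) : Prop := ∃ u v, ¬ r u v ∧ ∀ t, r t u ∨ r t v

/-- `x'` is an immediate successor (refinement) level of `x`. -/
def succAx (a : X) (T : X → X → X → Prop) (x x' : X) : Prop :=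
  sub (T x') (T x) ∧ ¬ sub (T x) (T x') ∧
    ∀ y, y ≠ a → ¬ (sub (T y) (T x) ∧ ¬ sub (T x) (T y) ∧ sub (T x') (T y) ∧ ¬ sub (T y) (T x'))

/-- The first-order axioms. -/
structure Ax (a : X) (T : X → X → X → Prop) : Prop where
  a1 : ∀ u v, ¬ T a u v
  refl : ∀ x, x ≠ a → ∀ u, T x u u
  symm : ∀ x, x ≠ a → ∀ u v, T x u v → T x v u
  trans : ∀ x, x ≠ a → ∀ u v w, T x u v → T x v w → T x u w
  total : ∀ x y, x ≠ a → y ≠ a → sub (T x) (T y) ∨ sub (T y) (T x)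
  sep : ∀ u v, u ≠ v → ∃ x, x ≠ a ∧ ¬ T x u v
  top : ∀ y, y ≠ a → ∃ x, x ≠ a ∧ (∀ z, z ≠ a → sub (T z) (T x)) ∧ twoCls (T x)
  split : ∀ x x', x ≠ a → x' ≠ a → succAx a T x x' →
    ∀ u, ∃ v w, T x u v ∧ T x u w ∧ ¬ T x' v w ∧ ∀ t, T x u t → T x' t v ∨ T x' t w
  al1 : ∀ x, x ≠ a → ¬ T x a x
  al2 : ∀ x y, x ≠ a → y ≠ a → sub (T x) (T y) → ¬ sub (T y) (T x) → T y a x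

/-- the models -/
def Mdl (X : Type) (a : X) : Type := {T : X → X → X → Prop // Ax a T}

/-- a "nondiscrete level" -/
def nd (a : X) (T : X → X → X → Prop) (x : X) : Prop :=
  x ≠ a ∧ ∃ u v, u ≠ v ∧ T x u v

/-- the matching relation: equivalent at every nondiscrete level -/
def Mr (a : X) (T : X → X → X → Prop) (u v : X) : Prop :=
  ∀ x, nd a T x → T x u v

section Basic

variable {a : X} {T : X → X → X → Prop}

lemma mr_refl (ax : Ax a T) (u : X) : Mr a T u u := fun x hx => ax.refl x hx.1 u

lemma mr_symm (ax : Ax a T) {u v : X} (h : Mr a T u v) : Mr a T v u :=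
  fun x hx => ax.symm x hx.1 _ _ (h x hx)

lemma mr_trans (ax : Ax a T) {u v w : X} (h : Mr a T u v) (h' : Mr a T v w) : Mr a T u w :=
  fun x hx => ax.trans x hx.1 _ _ _ (h x hx) (h' x hx)

lemma finset_least (ax : Ax a T) (s : Finset X) (hs : ∀ x ∈ s, x ≠ a) (hne : s.Nonempty) :
    ∃ x ∈ s, ∀ y ∈ s, sub (T x) (T y) := by
  classical
  induction s using Finset.induction_on with
  | empty => exact absurd hne (by simp)
  | @insert x s hx ih =>
    rcases s.eq_empty_or_nonempty with rfl | hs'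
    · exact ⟨x, by simp, by simp [sub_rfl]⟩
    · obtain ⟨x₀, hx₀s, hleast⟩ := ih (fun z hz => hs z (Finset.mem_insert_of_mem hz)) hs'
      have hxa : x ≠ a := hs x (Finset.mem_insert_self x s)
      have hx₀a : x₀ ≠ a := hs x₀ (Finset.mem_insert_of_mem hx₀s)
      rcases ax.total x x₀ hxa hx₀a with h | h
      · refine ⟨x, Finset.mem_insert_self x s, fun y hy => ?_⟩
        rcases Finset.mem_insert.1 hy with rfl | hy
        · exact sub_rfl
        · exact sub_trans h (hleast y hy)
      · refine ⟨x₀, Finset.mem_insert_of_mem hx₀s, fun y hy => ?_⟩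
        rcases Finset.mem_insert.1 hy with rfl | hy
        · exact h
        · exact hleast y hy

lemma exists_least [Finite X] (ax : Ax a T) (P : X → Prop) (hne : ∃ x, P x)
    (hPa : ∀ x, P x → x ≠ a) : ∃ x, P x ∧ ∀ y, P y → sub (T x) (T y) := by
  classical
  cases nonempty_fintype X
  obtain ⟨x, hx, hleast⟩ := finset_least ax (Finset.univ.filter P)
    (fun z hz => hPa z (by simpa using hz)) (by obtain ⟨x, hx⟩ := hne; exact ⟨x, by simpa using hx⟩)
  exact ⟨x, by simpa using hx, fun y hy => hleast y (by simpa using hy)⟩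

/-- the finest level exists and is discrete. -/
lemma exists_finest [Finite X] (ax : Ax a T) (h2 : ∃ b : X, b ≠ a) :
    ∃ x₀, x₀ ≠ a ∧ (∀ u v, T x₀ u v ↔ u = v) ∧ ∀ y, y ≠ a → sub (T x₀) (T y) := by
  obtain ⟨x₀, hx₀, hleast⟩ := exists_least ax (fun x => x ≠ a) h2 (fun x h => h)
  refine ⟨x₀, hx₀, fun u v => ⟨fun h => ?_, fun h => h ▸ ax.refl _ hx₀ u⟩, hleast⟩
  by_contra huv
  obtain ⟨x, hxa, hx⟩ := ax.sep u v huv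
  exact hx (hleast x hxa u v h)

lemma mr_a_of_discr (ax : Ax a T) {x : X} (hx : x ≠ a) (hd : ∀ u v, T x u v → u = v) :
    Mr a T a x := by
  intro z hz
  have hsub : sub (T x) (T z) := fun u v h => (hd u v h) ▸ ax.refl z hz.1 u
  have hnsub : ¬ sub (T z) (T x) := by
    obtain ⟨_, u, v, huv, hT⟩ := hz
    exact fun hs => huv (hd u v (hs u v hT))
  exact ax.al2 x z hx hz.1 hsub hnsub

lemma discr_of_mr_a (ax : Ax a T) {x : X} (hx : x ≠ a) (h : Mr a T a x) :
    ∀ u v, T x u v → u = v := by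
  intro u v hT
  by_contra huv
  exact ax.al1 x hx (h x ⟨hx, u, v, huv, hT⟩)

lemma nd_of_not_mr_a (ax : Ax a T) {x : X} (hx : x ≠ a) (h : ¬ Mr a T a x) : nd a T x := by
  refine ⟨hx, ?_⟩
  by_contra hc
  push_neg at hc
  exact h (mr_a_of_discr ax hx (fun u v hT => by
    by_contra huv; exact huv (by by_contra h'; exact (hc u v) h' hT)))

lemma not_mr_a_of_nd (ax : Ax a T) {x : X} (h : nd a T x) : ¬ Mr a T a x :=
  fun hm => ax.al1 x h.1 (hm x h)

/-- levels related by `Mr` which are not `Mr`-related to `a` are equal. -/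
lemma level_eq_of_mr (ax : Ax a T) {x y : X} (hx : x ≠ a) (hy : y ≠ a)
    (hax : ¬ Mr a T a x) (hxy : Mr a T x y) : ∀ u v, T x u v ↔ T y u v := by
  have hay : ¬ Mr a T a y := fun h => hax (mr_trans ax h (mr_symm ax hxy))
  have hndx : nd a T x := nd_of_not_mr_a ax hx hax
  have hndy : nd a T y := nd_of_not_mr_a ax hy hay
  rcases ax.total x y hx hy with hs | hs
  · by_cases hs' : sub (T y) (T x)
    · exact fun u v => ⟨fun h => hs u v h, fun h => hs' u v h⟩
    · exfalso
      have h1 : T y a x := ax.al2 x y hx hy hs hs'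
      have h2 : T y x y := hxy y hndy
      exact ax.al1 y hy (ax.trans y hy a x y h1 h2)
  · by_cases hs' : sub (T x) (T y)
    · exact fun u v => ⟨fun h => hs' u v h, fun h => hs u v h⟩
    · exfalso
      have h1 : T x a y := ax.al2 y x hy hx hs hs'
      have h2 : T x x y := hxy x hndx
      exact ax.al1 x hx (ax.trans x hx a y x h1 (ax.symm x hx x y h2))

/-- Existence and uniqueness of the `Mr`-partner. -/
lemma exists_partner [Finite X] (ax : Ax a T) (h2 : ∃ b : X, b ≠ a) (u : X) :
    ∃ v, v ≠ u ∧ Mr a T u v ∧ ∀ w, w ≠ u → Mr a T u w → w = v := by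
  classical
  by_cases hnd : ∃ x, nd a T x
  · -- there is a nondiscrete level; take the least one
    obtain ⟨xm, hxm, hleast⟩ := exists_least ax (nd a T) hnd (fun x h => h.1)
    have mr_iff : ∀ p q, Mr a T p q ↔ T xm p q :=
      fun p q => ⟨fun h => h xm hxm, fun h x hx => hleast x hx p q h⟩
    obtain ⟨xd, hxd, hdiscr, hdleast⟩ := exists_finest ax h2
    have hsucc : succAx a T xm xd := by
      refine ⟨fun p q h => ((hdiscr p q).1 h) ▸ ax.refl xm hxm.1 p, ?_, ?_⟩
      · obtain ⟨_, p, q, hpq, hT⟩ := hxm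
        exact fun hsb => hpq ((hdiscr p q).1 (hsb p q hT))
      · rintro y hy ⟨s1, s2, s3, s4⟩
        have : nd a T y := by
          refine ⟨hy, ?_⟩
          by_contra hc
          push_neg at hc
          refine s4 (fun p q h => (hdiscr p q).2 ?_)
          by_contra hpq
          exact hpq (by by_contra h'; exact (hc p q) h' h)
        exact s2 (hleast y this)
    obtain ⟨v, w, h1, h2', h3, hcov⟩ := ax.split xm xd hxm.1 hxd hsucc u
    have hvw : v ≠ w := fun h => h3 (h ▸ ax.refl xd hxd v)
    have huvw : u = v ∨ u = w := by
      rcases hcov u (ax.refl xm hxm.1 u) with h | h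
      · exact Or.inl ((hdiscr u v).1 h)
      · exact Or.inr ((hdiscr u w).1 h)
    rcases huvw with rfl | rfl
    · refine ⟨w, fun h => hvw h.symm, (mr_iff u w).2 h2', fun z hz hmz => ?_⟩
      rcases hcov z ((mr_iff u z).1 hmz) with h | h
      · exact absurd ((hdiscr z u).1 h) hz
      · exact (hdiscr z w).1 h
    · refine ⟨v, fun h => hvw h, (mr_iff u v).2 h1, fun z hz hmz => ?_⟩
      rcases hcov z ((mr_iff u z).1 hmz) with h | h
      · exact (hdiscr z v).1 h
      · exact absurd ((hdiscr z u).1 h) hz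
  · -- no nondiscrete level: the space has exactly two points
    push_neg at hnd
    have hmr : ∀ p q, Mr a T p q := fun p q x hx => absurd hx (hnd x)
    obtain ⟨b, hb⟩ := h2
    obtain ⟨x₀, hx₀a, _, p, q, hpq, hcov⟩ := ax.top b hb
    have hdiscr : ∀ α β, T x₀ α β → α = β := by
      intro α β h
      by_contra hne
      exact hnd x₀ ⟨hx₀a, α, β, hne, h⟩
    have hpq' : p ≠ q := fun h => hpq (h ▸ ax.refl x₀ hx₀a p)
    have hmem : ∀ t : X, t = p ∨ t = q := by
      intro t
      rcases hcov t with h | h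
      · exact Or.inl (hdiscr t p h)
      · exact Or.inr (hdiscr t q h)
    rcases hmem u with rfl | rfl
    · exact ⟨q, fun h => hpq' h.symm, hmr u q, fun w hw _ => (hmem w).resolve_left hw⟩
    · exact ⟨p, fun h => hpq' h, hmr u p, fun w hw _ => (hmem w).resolve_right hw⟩

end Basic

section Partner

variable {a : X} {T : X → X → X → Prop}

/-- the partner (matching) function -/
noncomputable def ptr [Finite X] (ax : Ax a T) (h2 : ∃ b : X, b ≠ a) (u : X) : X :=
  (exists_partner ax h2 u).choose

lemma ptr_ne [Finite X] (ax : Ax a T) (h2 : ∃ b : X, b ≠ a) (u : X) : ptr ax h2 u ≠ u :=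
  (exists_partner ax h2 u).choose_spec.1

lemma ptr_mr [Finite X] (ax : Ax a T) (h2 : ∃ b : X, b ≠ a) (u : X) : Mr a T u (ptr ax h2 u) :=
  (exists_partner ax h2 u).choose_spec.2.1

lemma ptr_uniq [Finite X] (ax : Ax a T) (h2 : ∃ b : X, b ≠ a) {u w : X} (hw : w ≠ u)
    (hmr : Mr a T u w) : w = ptr ax h2 u :=
  (exists_partner ax h2 u).choose_spec.2.2 w hw hmr

lemma ptr_invol [Finite X] (ax : Ax a T) (h2 : ∃ b : X, b ≠ a) :
    Function.Involutive (ptr ax h2) := by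
  intro u
  exact (ptr_uniq ax h2 (fun h => ptr_ne ax h2 u h.symm)
    (mr_symm ax (ptr_mr ax h2 u))).symm

lemma mr_iff_ptr [Finite X] (ax : Ax a T) (h2 : ∃ b : X, b ≠ a) (u v : X) :
    Mr a T u v ↔ (u = v ∨ ptr ax h2 u = v) := by
  constructor
  · intro h
    by_cases huv : u = v
    · exact Or.inl huv
    · exact Or.inr (ptr_uniq ax h2 (Ne.symm huv) h).symm
  · rintro (rfl | rfl)
    · exact mr_refl ax u
    · exact ptr_mr ax h2 u

end Partner

/-- fixed-point-free involutions -/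
def FPF (X : Type) : Type := {s : X → X // Function.Involutive s ∧ ∀ x, s x ≠ x}

/-- the setoid pairing `u` with `s u` -/
def pSet (s : FPF X) : Setoid X :=
  ⟨fun u v => u = v ∨ s.1 u = v, by
    constructor
    · exact fun x => Or.inl rfl
    · rintro x y (rfl | rfl)
      · exact Or.inl rfl
      · exact Or.inr (s.2.1 x)
    · rintro x y z (rfl | rfl) h
      · exact h
      · rcases h with rfl | rfl
        · exact Or.inr rfl
        · exact Or.inl (s.2.1 x).symm⟩

/-- the quotient -/
def Qt (s : FPF X) : Type := Quotient (pSet s)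

/-- class of an element -/
def qk (s : FPF X) (u : X) : Qt s := Quotient.mk (pSet s) u

lemma qk_eq_iff {s : FPF X} {u v : X} : qk s u = qk s v ↔ (u = v ∨ s.1 u = v) :=
  ⟨fun h => Quotient.exact h, fun h => Quotient.sound h⟩

lemma qk_surj {s : FPF X} (ξ : Qt s) : ∃ u, qk s u = ξ := Quotient.exists_rep ξ

/-- the quotient relation -/
def qRel (s : FPF X) (a : X) (T : X → X → X → Prop) : Qt s → Qt s → Qt s → Prop :=
  fun ξ υ ζ => ξ ≠ qk s a ∧ ∃ x u v, qk s x = ξ ∧ qk s u = υ ∧ qk s v = ζ ∧ T x u v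

/-- the lifted relation -/
def liftRel (s : FPF X) (a : X) (T' : Qt s → Qt s → Qt s → Prop) : X → X → X → Prop :=
  fun x u v => x ≠ a ∧ ((qk s x = qk s a ∧ u = v) ∨ (qk s x ≠ qk s a ∧ T' (qk s x) (qk s u) (qk s v)))

section Fwd

variable {a : X} {T : X → X → X → Prop} {s : FPF X}

/-- hypothesis tying `s` to the matching of the model -/
def HS (s : FPF X) (a : X) (T : X → X → X → Prop) : Prop :=
  ∀ u v, (u = v ∨ s.1 u = v) ↔ Mr a T u v

variable (hs : HS s a T)

lemma qk_eq_iff_mr (hs : HS s a T) {u v : X} : qk s u = qk s v ↔ Mr a T u v := by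
  rw [qk_eq_iff]; exact hs u v

lemma ne_a_of_qk_ne {u : X} (h : qk s u ≠ qk s a) : u ≠ a := fun hh => h (hh ▸ rfl)

lemma not_mr_a_of_qk_ne (ax : Ax a T) (hs : HS s a T) {x : X} (h : qk s x ≠ qk s a) :
    ¬ Mr a T a x := fun hm => h ((qk_eq_iff_mr hs).2 (mr_symm ax hm))

lemma nd_of_qk_ne (ax : Ax a T) (hs : HS s a T) {x : X} (h : qk s x ≠ qk s a) : nd a T x :=
  nd_of_not_mr_a ax (ne_a_of_qk_ne h) (not_mr_a_of_qk_ne ax hs h)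

lemma qk_ne_of_nd (ax : Ax a T) (hs : HS s a T) {x : X} (h : nd a T x) : qk s x ≠ qk s a :=
  fun hq => not_mr_a_of_nd ax h (mr_symm ax ((qk_eq_iff_mr hs).1 hq))

/-- the key well-definedness lemma for `qRel`. -/
lemma qRel_iff (ax : Ax a T) (hs : HS s a T) {x u v : X} (hx : qk s x ≠ qk s a) :
    qRel s a T (qk s x) (qk s u) (qk s v) ↔ T x u v := by
  constructor
  · rintro ⟨-, x₁, u₁, v₁, he1, he2, he3, hT⟩
    have hx₁ : qk s x₁ ≠ qk s a := he1 ▸ hx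
    have hlev := level_eq_of_mr ax (ne_a_of_qk_ne hx₁) (ne_a_of_qk_ne hx)
      (not_mr_a_of_qk_ne ax hs hx₁) ((qk_eq_iff_mr hs).1 (he1.trans rfl))
    have hT2 : T x u₁ v₁ := (hlev u₁ v₁).1 hT
    have hndx : nd a T x := nd_of_qk_ne ax hs hx
    have hu : T x u₁ u := ((qk_eq_iff_mr hs).1 he2) x hndx
    have hv : T x v₁ v := ((qk_eq_iff_mr hs).1 he3) x hndx
    have hxa := ne_a_of_qk_ne hx
    exact ax.trans x hxa u v₁ v (ax.trans x hxa u u₁ v₁ (ax.symm x hxa u₁ u hu) hT2) hv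
  · intro h
    exact ⟨hx, x, u, v, rfl, rfl, rfl, h⟩

lemma fwd_sub_iff (ax : Ax a T) (hs : HS s a T) {x z : X} (hx : qk s x ≠ qk s a)
    (hz : qk s z ≠ qk s a) :
    sub (qRel s a T (qk s x)) (qRel s a T (qk s z)) ↔ sub (T x) (T z) := by
  constructor
  · intro h u v hT
    exact (qRel_iff ax hs hz).1 (h (qk s u) (qk s v) ((qRel_iff ax hs hx).2 hT))
  · intro h υ ζ hq
    obtain ⟨u, rfl⟩ := qk_surj υ
    obtain ⟨v, rfl⟩ := qk_surj ζ
    exact (qRel_iff ax hs hz).2 (h u v ((qRel_iff ax hs hx).1 hq))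

theorem fwd_ax (ax : Ax a T) (hs : HS s a T) : Ax (qk s a) (qRel s a T) := by
  constructor
  case a1 => exact fun υ ζ h => h.1 rfl
  case refl =>
    intro ξ hξ υ
    obtain ⟨x, rfl⟩ := qk_surj ξ
    obtain ⟨u, rfl⟩ := qk_surj υ
    exact (qRel_iff ax hs hξ).2 (ax.refl x (ne_a_of_qk_ne hξ) u)
  case symm =>
    intro ξ hξ υ ζ h
    obtain ⟨x, rfl⟩ := qk_surj ξ
    obtain ⟨u, rfl⟩ := qk_surj υ
    obtain ⟨v, rfl⟩ := qk_surj ζ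
    exact (qRel_iff ax hs hξ).2 (ax.symm x (ne_a_of_qk_ne hξ) u v ((qRel_iff ax hs hξ).1 h))
  case trans =>
    intro ξ hξ υ ζ κ h h'
    obtain ⟨x, rfl⟩ := qk_surj ξ
    obtain ⟨u, rfl⟩ := qk_surj υ
    obtain ⟨v, rfl⟩ := qk_surj ζ
    obtain ⟨w, rfl⟩ := qk_surj κ
    exact (qRel_iff ax hs hξ).2 (ax.trans x (ne_a_of_qk_ne hξ) u v w
      ((qRel_iff ax hs hξ).1 h) ((qRel_iff ax hs hξ).1 h'))
  case total =>
    intro ξ ζ hξ hζ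
    obtain ⟨x, rfl⟩ := qk_surj ξ
    obtain ⟨z, rfl⟩ := qk_surj ζ
    rcases ax.total x z (ne_a_of_qk_ne hξ) (ne_a_of_qk_ne hζ) with h | h
    · exact Or.inl ((fwd_sub_iff ax hs hξ hζ).2 h)
    · exact Or.inr ((fwd_sub_iff ax hs hζ hξ).2 h)
  case sep =>
    intro υ ζ hne
    obtain ⟨u, rfl⟩ := qk_surj υ
    obtain ⟨v, rfl⟩ := qk_surj ζ
    have hm : ¬ Mr a T u v := fun h => hne ((qk_eq_iff_mr hs).2 h)
    rw [Mr] at hm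
    push_neg at hm
    obtain ⟨x, hxnd, hxT⟩ := hm
    have hx : qk s x ≠ qk s a := qk_ne_of_nd ax hs hxnd
    exact ⟨qk s x, hx, fun h => hxT ((qRel_iff ax hs hx).1 h)⟩
  case top =>
    intro υ hυ
    obtain ⟨c, rfl⟩ := qk_surj υ
    obtain ⟨x₀, hx₀a, hcoarse, p, q, hpq, hcov⟩ := ax.top c (ne_a_of_qk_ne hυ)
    have hndc : nd a T c := nd_of_qk_ne ax hs hυ
    have hndx₀ : nd a T x₀ := by
      obtain ⟨-, p', q', hpq', hT'⟩ := hndc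
      exact ⟨hx₀a, p', q', hpq', hcoarse c (ne_a_of_qk_ne hυ) p' q' hT'⟩
    have hx₀ : qk s x₀ ≠ qk s a := qk_ne_of_nd ax hs hndx₀
    refine ⟨qk s x₀, hx₀, ?_, qk s p, qk s q,
      fun h => hpq ((qRel_iff ax hs hx₀).1 h), ?_⟩
    · intro ζ hζ
      obtain ⟨z, rfl⟩ := qk_surj ζ
      exact (fwd_sub_iff ax hs hζ hx₀).2 (hcoarse z (ne_a_of_qk_ne hζ))
    · intro τ
      obtain ⟨t, rfl⟩ := qk_surj τ
      rcases hcov t with h | h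
      · exact Or.inl ((qRel_iff ax hs hx₀).2 h)
      · exact Or.inr ((qRel_iff ax hs hx₀).2 h)
  case split =>
    intro ξ ξ' hξ hξ' hsucc υ
    obtain ⟨x, rfl⟩ := qk_surj ξ
    obtain ⟨x', rfl⟩ := qk_surj ξ'
    obtain ⟨u, rfl⟩ := qk_surj υ
    obtain ⟨hs1, hs2, hs3⟩ := hsucc
    have hsucc' : succAx a T x x' := by
      refine ⟨(fwd_sub_iff ax hs hξ' hξ).1 hs1,
        fun h => hs2 ((fwd_sub_iff ax hs hξ hξ').2 h), ?_⟩
      rintro y hy ⟨t1, t2, t3, t4⟩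
      have hndy : nd a T y := by
        obtain ⟨-, p', q', hpq', hT'⟩ := nd_of_qk_ne ax hs hξ'
        exact ⟨hy, p', q', hpq', t3 p' q' hT'⟩
      have hyq : qk s y ≠ qk s a := qk_ne_of_nd ax hs hndy
      exact hs3 (qk s y) hyq ⟨(fwd_sub_iff ax hs hyq hξ).2 t1,
        fun h => t2 ((fwd_sub_iff ax hs hξ hyq).1 h),
        (fwd_sub_iff ax hs hξ' hyq).2 t3,
        fun h => t4 ((fwd_sub_iff ax hs hyq hξ').1 h)⟩
    obtain ⟨v, w, h1, h2, h3, hcov⟩ := ax.split x x' (ne_a_of_qk_ne hξ) (ne_a_of_qk_ne hξ') hsucc' u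
    refine ⟨qk s v, qk s w, (qRel_iff ax hs hξ).2 h1, (qRel_iff ax hs hξ).2 h2,
      fun h => h3 ((qRel_iff ax hs hξ').1 h), ?_⟩
    intro τ hτ
    obtain ⟨t, rfl⟩ := qk_surj τ
    rcases hcov t ((qRel_iff ax hs hξ).1 hτ) with h | h
    · exact Or.inl ((qRel_iff ax hs hξ').2 h)
    · exact Or.inr ((qRel_iff ax hs hξ').2 h)
  case al1 =>
    intro ξ hξ h
    obtain ⟨x, rfl⟩ := qk_surj ξ
    exact ax.al1 x (ne_a_of_qk_ne hξ) ((qRel_iff ax hs hξ).1 h)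
  case al2 =>
    intro ξ ζ hξ hζ h1 h2
    obtain ⟨x, rfl⟩ := qk_surj ξ
    obtain ⟨z, rfl⟩ := qk_surj ζ
    exact (qRel_iff ax hs hζ).2 (ax.al2 x z (ne_a_of_qk_ne hξ) (ne_a_of_qk_ne hζ)
      ((fwd_sub_iff ax hs hξ hζ).1 h1) (fun h => h2 ((fwd_sub_iff ax hs hζ hξ).2 h)))

end Fwd


section Bwd

variable {a : X} {s : FPF X} {T' : Qt s → Qt s → Qt s → Prop}

instance qtFinite [Finite X] (s : FPF X) : Finite (Qt s) := Quotient.finite _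

lemma qk_a_pair : qk s (s.1 a) = qk s a := qk_eq_iff.2 (Or.inr (s.2.1 a))

lemma qk_pair (u : X) : qk s (s.1 u) = qk s u := qk_eq_iff.2 (Or.inr (s.2.1 u))

lemma lift_of_eq {x u v : X} (hx : x ≠ a) (hq : qk s x = qk s a) :
    liftRel s a T' x u v ↔ u = v := by
  constructor
  · rintro ⟨-, (⟨-, h⟩ | ⟨hne, -⟩)⟩
    · exact h
    · exact absurd hq hne
  · exact fun h => ⟨hx, Or.inl ⟨hq, h⟩⟩

lemma lift_of_ne {x u v : X} (hx : x ≠ a) (hq : qk s x ≠ qk s a) :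
    liftRel s a T' x u v ↔ T' (qk s x) (qk s u) (qk s v) := by
  constructor
  · rintro ⟨-, (⟨h, -⟩ | ⟨-, h⟩)⟩
    · exact absurd h hq
    · exact h
  · exact fun h => ⟨hx, Or.inr ⟨hq, h⟩⟩

lemma lift_refl (ax' : Ax (qk s a) T') {x : X} (hx : x ≠ a) (u : X) :
    liftRel s a T' x u u := by
  by_cases hq : qk s x = qk s a
  · exact (lift_of_eq hx hq).2 rfl
  · exact (lift_of_ne hx hq).2 (ax'.refl _ hq _)

lemma bwd_sub_iff {x y : X} (hx : x ≠ a) (hy : y ≠ a) (hqx : qk s x ≠ qk s a)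
    (hqy : qk s y ≠ qk s a) :
    sub (liftRel s a T' x) (liftRel s a T' y) ↔ sub (T' (qk s x)) (T' (qk s y)) := by
  constructor
  · intro h υ ζ hT
    obtain ⟨u, rfl⟩ := qk_surj υ
    obtain ⟨v, rfl⟩ := qk_surj ζ
    exact (lift_of_ne hy hqy).1 (h u v ((lift_of_ne hx hqx).2 hT))
  · intro h u v hT
    exact (lift_of_ne hy hqy).2 (h _ _ ((lift_of_ne hx hqx).1 hT))

lemma sub_lift_of_eq_level (ax' : Ax (qk s a) T') {x y : X} (hx : x ≠ a)
    (hq : qk s x = qk s a) (hy : y ≠ a) :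
    sub (liftRel s a T' x) (liftRel s a T' y) := by
  intro u v h
  rw [lift_of_eq hx hq] at h
  exact h ▸ lift_refl ax' hy u

theorem bwd_ax [Finite X] (ax' : Ax (qk s a) T') : Ax a (liftRel s a T') := by
  constructor
  case a1 => exact fun u v h => h.1 rfl
  case refl => exact fun x hx u => lift_refl ax' hx u
  case symm =>
    intro x hx u v h
    by_cases hq : qk s x = qk s a
    · rw [lift_of_eq hx hq] at h ⊢; exact h.symm
    · rw [lift_of_ne hx hq] at h ⊢; exact ax'.symm _ hq _ _ h
  case trans =>
    intro x hx u v w h h'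
    by_cases hq : qk s x = qk s a
    · rw [lift_of_eq hx hq] at h h' ⊢; exact h.trans h'
    · rw [lift_of_ne hx hq] at h h' ⊢; exact ax'.trans _ hq _ _ _ h h'
  case total =>
    intro x y hx hy
    by_cases hqx : qk s x = qk s a
    · exact Or.inl (sub_lift_of_eq_level ax' hx hqx hy)
    · by_cases hqy : qk s y = qk s a
      · exact Or.inr (sub_lift_of_eq_level ax' hy hqy hx)
      · rcases ax'.total _ _ hqx hqy with h | h
        · exact Or.inl ((bwd_sub_iff hx hy hqx hqy).2 h)
        · exact Or.inr ((bwd_sub_iff hy hx hqy hqx).2 h)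
  case sep =>
    intro u v huv
    by_cases hq : qk s u = qk s v
    · refine ⟨s.1 a, s.2.2 a, ?_⟩
      rw [lift_of_eq (s.2.2 a) qk_a_pair]
      exact huv
    · obtain ⟨ξ, hξa, hξ⟩ := ax'.sep _ _ hq
      obtain ⟨x, rfl⟩ := qk_surj ξ
      have hx : x ≠ a := ne_a_of_qk_ne hξa
      exact ⟨x, hx, fun h => hξ ((lift_of_ne hx hξa).1 h)⟩
  case top =>
    intro y hy
    by_cases hall : ∀ z : X, qk s z = qk s a
    · refine ⟨s.1 a, s.2.2 a, ?_, a, s.1 a, ?_, ?_⟩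
      · intro z hz
        exact sub_lift_of_eq_level ax' hz (hall z) (s.2.2 a)
      · rw [lift_of_eq (s.2.2 a) qk_a_pair]
        exact fun h => s.2.2 a h.symm
      · intro t
        rcases qk_eq_iff.1 (hall t) with h | h
        · exact Or.inl ((lift_of_eq (s.2.2 a) qk_a_pair).2 h)
        · refine Or.inr ((lift_of_eq (s.2.2 a) qk_a_pair).2 ?_)
          rw [← h, s.2.1 t]
    · push_neg at hall
      obtain ⟨c, hc⟩ := hall
      obtain ⟨ξ₀, hξ₀a, hcoarse, p', q', hpq', hcov'⟩ := ax'.top (qk s c) hc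
      obtain ⟨x₀, rfl⟩ := qk_surj ξ₀
      have hx₀ : x₀ ≠ a := ne_a_of_qk_ne hξ₀a
      obtain ⟨p, rfl⟩ := qk_surj p'
      obtain ⟨q, rfl⟩ := qk_surj q'
      refine ⟨x₀, hx₀, ?_, p, q, fun h => hpq' ((lift_of_ne hx₀ hξ₀a).1 h), ?_⟩
      · intro z hz
        by_cases hqz : qk s z = qk s a
        · exact sub_lift_of_eq_level ax' hz hqz hx₀
        · exact (bwd_sub_iff hz hx₀ hqz hξ₀a).2 (hcoarse _ hqz)
      · intro t
        rcases hcov' (qk s t) with h | h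
        · exact Or.inl ((lift_of_ne hx₀ hξ₀a).2 h)
        · exact Or.inr ((lift_of_ne hx₀ hξ₀a).2 h)
  case split =>
    intro x x' hx hx' hsucc u
    obtain ⟨s1, s2, s3⟩ := hsucc
    by_cases hqx : qk s x = qk s a
    · exact absurd (sub_lift_of_eq_level ax' hx hqx hx') s2
    · by_cases hqx' : qk s x' = qk s a
      · by_cases hdisc : ∀ υ ζ : Qt s, T' (qk s x) υ ζ → υ = ζ
        · refine ⟨u, s.1 u, lift_refl ax' hx u, ?_, ?_, ?_⟩
          · rw [lift_of_ne hx hqx, qk_pair u]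
            exact ax'.refl _ hqx _
          · rw [lift_of_eq hx' hqx']
            exact fun h => s.2.2 u h.symm
          · intro t ht
            rw [lift_of_ne hx hqx] at ht
            rcases qk_eq_iff.1 (hdisc _ _ ht).symm with h | h
            · exact Or.inl ((lift_of_eq hx' hqx').2 h)
            · refine Or.inr ((lift_of_eq hx' hqx').2 ?_)
              rw [← h, s.2.1 t]
        · exfalso
          push_neg at hdisc
          obtain ⟨υ, ζ, hTpq, hpq⟩ := hdisc
          obtain ⟨ξd, hξd, hdiscr', hdleast'⟩ := exists_finest ax' ⟨qk s x, hqx⟩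
          obtain ⟨y, rfl⟩ := qk_surj ξd
          have hya : y ≠ a := ne_a_of_qk_ne hξd
          obtain ⟨p, rfl⟩ := qk_surj υ
          obtain ⟨q, rfl⟩ := qk_surj ζ
          refine s3 y hya ⟨(bwd_sub_iff hya hx hξd hqx).2 (hdleast' _ hqx), ?_, ?_, ?_⟩
          · intro hsb
            have h1 : liftRel s a T' x p q := (lift_of_ne hx hqx).2 hTpq
            have h2 := (lift_of_ne hya hξd).1 (hsb p q h1)
            exact hpq ((hdiscr' _ _).1 h2)
          · intro α β h
            rw [lift_of_eq hx' hqx'] at h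
            exact h ▸ lift_refl ax' hya α
          · intro hsb
            have h1 : liftRel s a T' y a (s.1 a) := by
              rw [lift_of_ne hya hξd, qk_a_pair]
              exact ax'.refl _ hξd _
            have h2 := (lift_of_eq hx' hqx').1 (hsb _ _ h1)
            exact s.2.2 a h2.symm
      · have hsucc' : succAx (qk s a) T' (qk s x) (qk s x') := by
          refine ⟨(bwd_sub_iff hx' hx hqx' hqx).1 s1,
            fun h => s2 ((bwd_sub_iff hx hx' hqx hqx').2 h), ?_⟩
          rintro υ hυa ⟨t1, t2, t3, t4⟩
          obtain ⟨y, rfl⟩ := qk_surj υ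
          have hya : y ≠ a := ne_a_of_qk_ne hυa
          exact s3 y hya ⟨(bwd_sub_iff hya hx hυa hqx).2 t1,
            fun h => t2 ((bwd_sub_iff hx hya hqx hυa).1 h),
            (bwd_sub_iff hx' hya hqx' hυa).2 t3,
            fun h => t4 ((bwd_sub_iff hya hx' hυa hqx').1 h)⟩
        obtain ⟨υv, υw, h1, h2, h3, hcov⟩ := ax'.split _ _ hqx hqx' hsucc' (qk s u)
        obtain ⟨v, rfl⟩ := qk_surj υv
        obtain ⟨w, rfl⟩ := qk_surj υw
        refine ⟨v, w, (lift_of_ne hx hqx).2 h1, (lift_of_ne hx hqx).2 h2,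
          fun h => h3 ((lift_of_ne hx' hqx').1 h), ?_⟩
        intro t ht
        rcases hcov (qk s t) ((lift_of_ne hx hqx).1 ht) with h | h
        · exact Or.inl ((lift_of_ne hx' hqx').2 h)
        · exact Or.inr ((lift_of_ne hx' hqx').2 h)
  case al1 =>
    intro x hx h
    by_cases hq : qk s x = qk s a
    · exact hx ((lift_of_eq hx hq).1 h).symm
    · exact ax'.al1 _ hq ((lift_of_ne hx hq).1 h)
  case al2 =>
    intro x y hx hy hsb hnsb
    by_cases hqy : qk s y = qk s a
    · exact absurd (sub_lift_of_eq_level ax' hy hqy hx) hnsb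
    · by_cases hqx : qk s x = qk s a
      · rw [lift_of_ne hy hqy, hqx]
        exact ax'.refl _ hqy _
      · rw [lift_of_ne hy hqy]
        exact ax'.al2 _ _ hqx hqy ((bwd_sub_iff hx hy hqx hqy).1 hsb)
          (fun h => hnsb ((bwd_sub_iff hy hx hqy hqx).2 h))

end Bwd


section Roundtrip

variable {a : X} {s : FPF X}

/-- lifting the quotient model recovers the original model -/
lemma bwd_fwd {T : X → X → X → Prop} (ax : Ax a T) (hs : HS s a T) :
    liftRel s a (qRel s a T) = T := by
  funext x u v
  apply propext
  by_cases hx : x = a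
  · subst hx
    exact ⟨fun h => absurd rfl h.1, fun h => absurd h (ax.a1 u v)⟩
  · by_cases hq : qk s x = qk s a
    · rw [lift_of_eq hx hq]
      have hmr : Mr a T a x := mr_symm ax ((qk_eq_iff_mr hs).1 hq)
      exact ⟨fun h => h ▸ ax.refl x hx u, fun h => discr_of_mr_a ax hx hmr u v h⟩
    · rw [lift_of_ne hx hq]
      exact qRel_iff ax hs hq
  
/-- the lifted model has matching exactly `s` -/
lemma lift_HS [Finite X] {T' : Qt s → Qt s → Qt s → Prop} (ax' : Ax (qk s a) T') :
    HS s a (liftRel s a T') := by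
  intro u v
  constructor
  · rintro (rfl | rfl)
    · exact mr_refl (bwd_ax ax') u
    · intro z hz
      have hqz : qk s z ≠ qk s a := by
        intro hq
        obtain ⟨hza, p, q, hpq, hL⟩ := hz
        exact hpq ((lift_of_eq hza hq).1 hL)
      refine (lift_of_ne hz.1 hqz).2 ?_
      rw [qk_pair u]
      exact ax'.refl _ hqz _
  · intro h
    by_cases huv : u = v
    · exact Or.inl huv
    · by_cases hall : ∀ z : X, qk s z = qk s a
      · have : qk s u = qk s v := (hall u).trans (hall v).symm
        rcases qk_eq_iff.1 this with h' | h'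
        · exact absurd h' huv
        · exact Or.inr h'
      · push_neg at hall
        obtain ⟨c, hc⟩ := hall
        obtain ⟨ξd, hξd, hdiscr', -⟩ := exists_finest ax' ⟨qk s c, hc⟩
        obtain ⟨y, rfl⟩ := qk_surj ξd
        have hya : y ≠ a := ne_a_of_qk_ne hξd
        have hndy : nd a (liftRel s a T') y := by
          refine ⟨hya, a, s.1 a, fun hh => s.2.2 a hh.symm, ?_⟩
          rw [lift_of_ne hya hξd, qk_a_pair]
          exact ax'.refl _ hξd _
        have hL := h y hndy
        rw [lift_of_ne hya hξd] at hL
        rcases qk_eq_iff.1 ((hdiscr' _ _).1 hL) with h' | h'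
        · exact absurd h' huv
        · exact Or.inr h'
      
end Roundtrip

section Roundtrip2

variable {a : X} {s : FPF X}

/-- taking the quotient of the lifted model recovers the quotient model -/
lemma fwd_bwd {T' : Qt s → Qt s → Qt s → Prop} (ax' : Ax (qk s a) T') :
    qRel s a (liftRel s a T') = T' := by
  funext ξ υ ζ
  apply propext
  by_cases hξ : ξ = qk s a
  · subst hξ
    exact ⟨fun h => absurd rfl h.1, fun h => absurd h (ax'.a1 υ ζ)⟩
  · obtain ⟨x, rfl⟩ := qk_surj ξ
    obtain ⟨u, rfl⟩ := qk_surj υ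
    obtain ⟨v, rfl⟩ := qk_surj ζ
    constructor
    · rintro ⟨-, x₁, u₁, v₁, e1, e2, e3, hL⟩
      have hq1 : qk s x₁ ≠ qk s a := e1 ▸ hξ
      rw [lift_of_ne (ne_a_of_qk_ne hq1) hq1, e1, e2, e3] at hL
      exact hL
    · intro h
      refine ⟨hξ, x, u, v, rfl, rfl, rfl, ?_⟩
      rw [lift_of_ne (ne_a_of_qk_ne hξ) hξ]
      exact h

end Roundtrip2

section Counting

variable {a : X}

/-- the canonical matching of a model, as a fixed-point-free involution -/
noncomputable def sOf [Finite X] {T : X → X → X → Prop} (ax : Ax a T)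
    (h2 : ∃ b : X, b ≠ a) : FPF X :=
  ⟨ptr ax h2, ptr_invol ax h2, fun u => ptr_ne ax h2 u⟩

lemma hs_sOf [Finite X] {T : X → X → X → Prop} (ax : Ax a T) (h2 : ∃ b : X, b ≠ a) :
    HS (sOf ax h2) a T := fun u v => (mr_iff_ptr ax h2 u v).symm

lemma sOf_eq [Finite X] {T : X → X → X → Prop} (ax : Ax a T) (h2 : ∃ b : X, b ≠ a)
    {s : FPF X} (hs : HS s a T) : sOf ax h2 = s := by
  refine Subtype.ext (funext fun u => ?_)
  exact (ptr_uniq ax h2 (s.2.2 u) ((hs u (s.1 u)).1 (Or.inr rfl))).symm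

instance mdlFinite [Finite X] : Finite (Mdl X a) :=
  inferInstanceAs (Finite {T : X → X → X → Prop // Ax a T})

instance fpfFinite [Finite X] : Finite (FPF X) :=
  inferInstanceAs (Finite {s : X → X // Function.Involutive s ∧ ∀ x, s x ≠ x})

/-- the matching as a map on models -/
noncomputable def matchOf [Finite X] (a : X) (h2 : ∃ b : X, b ≠ a) (Tm : Mdl X a) : FPF X :=
  sOf Tm.2 h2

/-- the fiber of models with a given matching is equivalent to the models on the quotient. -/
noncomputable def fiberEquiv [Finite X] (h2 : ∃ b : X, b ≠ a) (s : FPF X) :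
    {Tm : Mdl X a // matchOf a h2 Tm = s} ≃ Mdl (Qt s) (qk s a) where
  toFun p := ⟨qRel s a p.1.1, fwd_ax p.1.2 (by
    have h := hs_sOf p.1.2 h2
    rw [show sOf p.1.2 h2 = s from p.2] at h
    exact h)⟩
  invFun q := ⟨⟨liftRel s a q.1, bwd_ax q.2⟩, sOf_eq _ h2 (lift_HS q.2)⟩
  left_inv p := by
    refine Subtype.ext (Subtype.ext ?_)
    apply bwd_fwd p.1.2
    have h := hs_sOf p.1.2 h2
    rw [show sOf p.1.2 h2 = s from p.2] at h
    exact h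
  right_inv q := Subtype.ext (fwd_bwd q.2)

lemma nat_card_sigma {ι : Type} [Fintype ι] (β : ι → Type) [∀ i, Finite (β i)] :
    Nat.card (Sigma β) = ∑ i, Nat.card (β i) := by
  classical
  letI : ∀ i, Fintype (β i) := fun i => Fintype.ofFinite _
  rw [Nat.card_eq_fintype_card, Fintype.card_sigma]
  exact Finset.sum_congr rfl fun i _ => (Nat.card_eq_fintype_card).symm

lemma card_mdl_sum [Finite X] (a : X) (h2 : ∃ b : X, b ≠ a) :
    ∃ F : Fintype (FPF X), Nat.card (Mdl X a) =
      ∑ s : FPF X, Nat.card (Mdl (Qt s) (qk s a)) := by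
  classical
  letI F : Fintype (FPF X) := Fintype.ofFinite _
  refine ⟨F, ?_⟩
  rw [← Nat.card_congr (Equiv.sigmaFiberEquiv (matchOf a h2)),
    nat_card_sigma]
  exact Finset.sum_congr rfl fun s _ => Nat.card_congr (fiberEquiv h2 s)

/-- each pair class has exactly two elements -/
lemma card_qt_fiber [Finite X] (s : FPF X) (ξ : Qt s) :
    Nat.card {x : X // qk s x = ξ} = 2 := by
  obtain ⟨r, rfl⟩ := qk_surj ξ
  rw [Nat.card_eq_two_iff' (⟨r, rfl⟩ : {x : X // qk s x = qk s r})]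
  refine ⟨⟨s.1 r, qk_pair r⟩, ?_, ?_⟩
  · intro h
    exact s.2.2 r (congrArg Subtype.val h)
  · rintro ⟨z, hz⟩ hne
    rcases qk_eq_iff.1 hz with h | h
    · exact absurd (Subtype.ext h) hne
    · refine Subtype.ext ?_
      show z = s.1 r
      rw [← h, s.2.1 z]

lemma card_qt [Finite X] (s : FPF X) : Nat.card X = 2 * Nat.card (Qt s) := by
  classical
  letI : Fintype (Qt s) := Fintype.ofFinite _
  rw [← Nat.card_congr (Equiv.sigmaFiberEquiv (qk s)), nat_card_sigma]
  rw [Finset.sum_congr rfl fun ξ _ => card_qt_fiber s ξ]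
  simp [Nat.card_eq_fintype_card, mul_comm]

/-- Spectrum: any model forces a power-of-two universe. -/
theorem spec_pow : ∀ (n : ℕ) (X : Type) [Finite X] (a : X) (T : X → X → X → Prop),
    Ax a T → Nat.card X = n → ∃ m, n = 2 ^ m := by
  intro n
  induction n using Nat.strong_induction_on with
  | _ n ih =>
    intro X _ a T ax hc
    have hne : Nonempty X := ⟨a⟩
    have hpos : 0 < n := hc ▸ Nat.card_pos
    by_cases h1 : n = 1
    · exact ⟨0, by simp [h1]⟩
    · have h2 : ∃ b : X, b ≠ a := by
        classical
        letI := Fintype.ofFinite X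
        refine Fintype.exists_ne_of_one_lt_card ?_ a
        rw [← Nat.card_eq_fintype_card, hc]
        omega
      have hq := card_qt (sOf ax h2)
      have ax' := fwd_ax ax (hs_sOf ax h2)
      have hne' : Nonempty (Qt (sOf ax h2)) := ⟨qk _ a⟩
      have hpos' : 0 < Nat.card (Qt (sOf ax h2)) := Nat.card_pos
      have hlt : Nat.card (Qt (sOf ax h2)) < n := by omega
      obtain ⟨m, hm⟩ := ih _ hlt (Qt (sOf ax h2)) (qk _ a) _ ax' rfl
      refine ⟨m + 1, ?_⟩
      rw [← hc, hq, hm, pow_succ, mul_comm]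

end Counting

section Parity

lemma odd_sum {ι : Type} [Fintype ι] (f : ι → ℕ) (hf : ∀ i, Odd (f i))
    (hι : Odd (Fintype.card ι)) : Odd (∑ i, f i) := by
  rw [Nat.odd_iff] at hι ⊢
  rw [Finset.sum_nat_mod, Finset.sum_congr rfl (fun i _ => Nat.odd_iff.1 (hf i))]
  simpa using hι

/-- forward restriction of a fixed-point-free involution -/
def fpfResFun (x₀ y : X) (p : {s : FPF X // s.1 x₀ = y}) (z : {z : X // z ≠ x₀ ∧ z ≠ y}) :
    {z : X // z ≠ x₀ ∧ z ≠ y} := by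
  refine ⟨p.1.1 z.1, fun h => z.2.2 ?_, fun h => z.2.1 ?_⟩
  · exact (p.1.2.1 z.1).symm.trans ((congrArg p.1.1 h).trans p.2)
  · exact (p.1.2.1 z.1).symm.trans ((congrArg p.1.1 h).trans
      ((congrArg p.1.1 p.2).symm.trans (p.1.2.1 x₀)))

/-- backward extension of a fixed-point-free involution -/
noncomputable def fpfExtFun (x₀ y : X) (t : FPF {z : X // z ≠ x₀ ∧ z ≠ y}) (z : X) : X := by
  classical
  exact if hz : z = x₀ then y else if hzy : z = y then x₀ else (t.1 ⟨z, hz, hzy⟩).1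

lemma fpfExtFun_x₀ (x₀ y : X) (t : FPF {z : X // z ≠ x₀ ∧ z ≠ y}) :
    fpfExtFun x₀ y t x₀ = y := by simp [fpfExtFun]

lemma fpfExtFun_y (x₀ y : X) (hy : y ≠ x₀) (t : FPF {z : X // z ≠ x₀ ∧ z ≠ y}) :
    fpfExtFun x₀ y t y = x₀ := by simp [fpfExtFun, hy]

lemma fpfExtFun_other (x₀ y : X) (t : FPF {z : X // z ≠ x₀ ∧ z ≠ y}) (z : X)
    (hz : z ≠ x₀) (hzy : z ≠ y) : fpfExtFun x₀ y t z = (t.1 ⟨z, hz, hzy⟩).1 := by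
  simp [fpfExtFun, hz, hzy]

lemma fpfExtFun_invol (x₀ y : X) (hy : y ≠ x₀) (t : FPF {z : X // z ≠ x₀ ∧ z ≠ y}) :
    Function.Involutive (fpfExtFun x₀ y t) := by
  intro z
  by_cases hz : z = x₀
  · rw [hz, fpfExtFun_x₀, fpfExtFun_y x₀ y hy]
  · by_cases hzy : z = y
    · rw [hzy, fpfExtFun_y x₀ y hy, fpfExtFun_x₀]
    · rw [fpfExtFun_other x₀ y t z hz hzy,
        fpfExtFun_other x₀ y t _ (t.1 ⟨z, hz, hzy⟩).2.1 (t.1 ⟨z, hz, hzy⟩).2.2]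
      have h1 : (⟨(t.1 ⟨z, hz, hzy⟩).1, (t.1 ⟨z, hz, hzy⟩).2.1, (t.1 ⟨z, hz, hzy⟩).2.2⟩ :
          {z : X // z ≠ x₀ ∧ z ≠ y}) = t.1 ⟨z, hz, hzy⟩ := rfl
      rw [h1, t.2.1 ⟨z, hz, hzy⟩]

lemma fpfExtFun_fpf (x₀ y : X) (hy : y ≠ x₀) (t : FPF {z : X // z ≠ x₀ ∧ z ≠ y}) (z : X) :
    fpfExtFun x₀ y t z ≠ z := by
  by_cases hz : z = x₀
  · rw [hz, fpfExtFun_x₀]; exact fun h => hy h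
  · by_cases hzy : z = y
    · rw [hzy, fpfExtFun_y x₀ y hy]; exact fun h => hy h.symm
    · rw [fpfExtFun_other x₀ y t z hz hzy]
      intro h
      exact t.2.2 ⟨z, hz, hzy⟩ (Subtype.ext h)

/-- restriction equivalence for fixed-point-free involutions -/
noncomputable def fpfRes (x₀ y : X) (hy : y ≠ x₀) :
    {s : FPF X // s.1 x₀ = y} ≃ FPF {z : X // z ≠ x₀ ∧ z ≠ y} where
  toFun p := ⟨fpfResFun x₀ y p, fun z => Subtype.ext (p.1.2.1 z.1),
    fun z h => p.1.2.2 z.1 (congrArg Subtype.val h)⟩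
  invFun t := ⟨⟨fpfExtFun x₀ y t, fpfExtFun_invol x₀ y hy t, fpfExtFun_fpf x₀ y hy t⟩,
    fpfExtFun_x₀ x₀ y t⟩
  left_inv p := by
    refine Subtype.ext (Subtype.ext (funext fun z => ?_))
    show fpfExtFun x₀ y _ z = p.1.1 z
    by_cases hz : z = x₀
    · erw [hz, fpfExtFun_x₀, p.2]
    · by_cases hzy : z = y
      · erw [hzy, fpfExtFun_y x₀ y hy]
        exact ((congrArg p.1.1 p.2).symm.trans (p.1.2.1 x₀)).symm
      · erw [fpfExtFun_other _ _ _ z hz hzy]; rfl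
  right_inv t := by
    refine Subtype.ext (funext fun z => Subtype.ext ?_)
    show fpfExtFun x₀ y t z.1 = (t.1 z).1
    rw [fpfExtFun_other x₀ y t z.1 z.2.1 z.2.2]

lemma card_split_two [Finite X] (x₀ y : X) (hy : y ≠ x₀) :
    Nat.card X = Nat.card {z : X // z ≠ x₀ ∧ z ≠ y} + 2 := by
  classical
  have e : ({z : X // z ≠ x₀ ∧ z ≠ y} ⊕ Bool) ≃ X := by
    refine Equiv.ofBijective
      (fun w => Sum.elim (fun z : {z : X // z ≠ x₀ ∧ z ≠ y} => z.1)
        (fun b => if b then x₀ else y) w) ⟨?_, ?_⟩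
    · rintro (z1 | b1) (z2 | b2) h
      · exact congrArg Sum.inl (Subtype.ext h)
      · exfalso
        cases b2 with
        | true => exact z1.2.1 h
        | false => exact z1.2.2 h
      · exfalso
        cases b1 with
        | true => exact z2.2.1 h.symm
        | false => exact z2.2.2 h.symm
      · cases b1 <;> cases b2 <;> simp at h ⊢
        · first
          | exact absurd h hy | exact absurd h.symm hy
          | exact absurd h (Ne.symm hy) | exact absurd h.symm (Ne.symm hy)
        · first
          | exact absurd h hy | exact absurd h.symm hy
          | exact absurd h (Ne.symm hy) | exact absurd h.symm (Ne.symm hy)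
    · intro x
      by_cases hx : x = x₀
      · exact ⟨Sum.inr true, by simp [hx]⟩
      · by_cases hxy : x = y
        · exact ⟨Sum.inr false, by simp [hxy]⟩
        · exact ⟨Sum.inl ⟨x, hx, hxy⟩, rfl⟩
  rw [← Nat.card_congr e, Nat.card_sum]
  simp

theorem fpf_card_odd : ∀ (k : ℕ) (X : Type) [Finite X], Nat.card X = 2 * k →
    Odd (Nat.card (FPF X)) := by
  intro k
  induction k with
  | zero =>
    intro X _ hX
    have hE : IsEmpty X := by
      rcases Nat.card_eq_zero.1 (by simpa using hX) with h | h
      · exact h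
      · exact absurd ‹Finite X› h.not_finite
    have h1 : Nat.card (FPF X) = 1 := Nat.card_eq_one_iff_unique.2
      ⟨⟨fun s t => Subtype.ext (funext fun x => hE.elim x)⟩,
      ⟨⟨id, fun x => rfl, fun x => hE.elim x⟩⟩⟩
    rw [h1]
    exact odd_one
  | succ k ih =>
    intro X _ hX
    classical
    have hne : Nonempty X := by
      have hpos : 0 < Nat.card X := by omega
      exact (Nat.card_pos_iff.1 hpos).1
    obtain ⟨x₀⟩ := hne
    letI : Fintype X := Fintype.ofFinite X
    letI : Fintype {y : X // y ≠ x₀} := Fintype.ofFinite _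
    have hdec : Nat.card (FPF X) =
        ∑ y : {y : X // y ≠ x₀}, Nat.card {s : FPF X // s.1 x₀ = y.1} := by
      rw [← Nat.card_congr (Equiv.sigmaFiberEquiv
        (fun s : FPF X => (⟨s.1 x₀, s.2.2 x₀⟩ : {y : X // y ≠ x₀}))), nat_card_sigma]
      refine Finset.sum_congr rfl fun y _ => Nat.card_congr (Equiv.subtypeEquivRight fun s => ?_)
      exact ⟨fun h => congrArg Subtype.val h, fun h => Subtype.ext h⟩
    rw [hdec]
    apply odd_sum
    · intro y
      rw [Nat.card_congr (fpfRes x₀ y.1 y.2)]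
      apply ih
      have hsplit := card_split_two x₀ y.1 y.2
      omega
    · have h1 : Nat.card {y : X // y ≠ x₀} = 2 * k + 1 := by
        have e : ({z : X // z ≠ x₀} ⊕ Unit) ≃ X := by
          refine Equiv.ofBijective
            (fun w => Sum.elim (fun z : {z : X // z ≠ x₀} => z.1) (fun _ => x₀) w) ⟨?_, ?_⟩
          · rintro (z1 | b1) (z2 | b2) h
            · exact congrArg Sum.inl (Subtype.ext h)
            · exact absurd h z1.2
            · exact absurd h.symm z2.2
            · rfl
          · intro x
            by_cases hx : x = x₀
            · exact ⟨Sum.inr (), hx.symm⟩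
            · exact ⟨Sum.inl ⟨x, hx⟩, rfl⟩
        have hthis := Nat.card_congr e
        have hu : Nat.card Unit = 1 := Nat.card_unique
        rw [Nat.card_sum, hu] at hthis
        omega
      rw [← Nat.card_eq_fintype_card, h1]
      exact ⟨k, by ring⟩

theorem mdl_card_odd : ∀ (m : ℕ) (X : Type) [Finite X] (a : X), Nat.card X = 2 ^ m →
    Odd (Nat.card (Mdl X a)) := by
  intro m
  induction m with
  | zero =>
    intro X _ a hX
    have hsub : ∀ x : X, x = a := by
      have h := (Nat.card_eq_one_iff_unique.1 (by simpa using hX)).1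
      exact fun x => Subsingleton.elim x a
    have h1 : Nat.card (Mdl X a) = 1 := by
      rw [Nat.card_eq_one_iff_unique]
      constructor
      · constructor
        intro T1 T2
        refine Subtype.ext (funext fun x => funext fun u => funext fun v => propext ?_)
        constructor
        · intro h
          rw [hsub x] at h
          exact absurd h (T1.2.a1 u v)
        · intro h
          rw [hsub x] at h
          exact absurd h (T2.2.a1 u v)
      · refine ⟨⟨fun _ _ _ => False, ?_⟩⟩
        constructor
        case a1 => exact fun u v h => h
        case refl => exact fun x hx => absurd (hsub x) hx
        case symm => exact fun x hx => absurd (hsub x) hx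
        case trans => exact fun x hx => absurd (hsub x) hx
        case total => exact fun x y hx => absurd (hsub x) hx
        case sep => exact fun u v huv => absurd ((hsub u).trans (hsub v).symm) huv
        case top => exact fun y hy => absurd (hsub y) hy
        case split => exact fun x x' hx => absurd (hsub x) hx
        case al1 => exact fun x hx => absurd (hsub x) hx
        case al2 => exact fun x y hx => absurd (hsub x) hx
    rw [h1]
    exact odd_one
  | succ m ih =>
    intro X _ a hX
    classical
    have h2 : ∃ b : X, b ≠ a := by
      letI : Fintype X := Fintype.ofFinite X
      refine Fintype.exists_ne_of_one_lt_card ?_ a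
      rw [← Nat.card_eq_fintype_card, hX]
      have : 2 ^ (m + 1) = 2 * 2 ^ m := by ring
      have hp : 0 < 2 ^ m := Nat.pow_pos (by norm_num)
      omega
    obtain ⟨F, hsum⟩ := card_mdl_sum a h2
    rw [hsum]
    apply odd_sum
    · intro s
      apply ih
      have hq := card_qt s
      rw [hX] at hq
      have : 2 ^ (m + 1) = 2 * 2 ^ m := by ring
      omega
    · have hodd := fpf_card_odd (2 ^ m) X (by rw [hX]; ring)
      rwa [Nat.card_eq_fintype_card] at hodd

end Parity

section Logic

abbrev LL := cLang 1 rels3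

def Rsym : LL.Relations 3 := (0 : Fin 1)

/-- the constant symbol as a term -/
def aT {α : Type} : LL.Term α := Term.func (show LL.Functions 0 from (0 : Fin 1)) ![]

/-- atomic formula `R t₁ t₂ t₃` -/
def rf {α : Type} (t₁ t₂ t₃ : LL.Term α) : LL.Formula α := Rsym.formula ![t₁, t₂, t₃]

/-- atomic formula `R x u v` on variables -/
def rv {α : Type} (i j k : α) : LL.Formula α := rf (Term.var i) (Term.var j) (Term.var k)

/-- `x ≠ a` -/
def neA {α : Type} (i : α) : LL.Formula α := ∼(Term.equal (Term.var i) aT)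

/-- `sub (T i) (T j)` as a formula -/
noncomputable def subF {α : Type} (i j : α) : LL.Formula α :=
  Formula.iAllsO (γ := Fin 2) (id : (α ⊕ Fin 2) → α ⊕ Fin 2)
    ((rv (Sum.inl i) (Sum.inr 0) (Sum.inr 1)).imp (rv (Sum.inl j) (Sum.inr 0) (Sum.inr 1)))

/-- `succAx a T i j` as a formula -/
noncomputable def succF {α : Type} (i j : α) : LL.Formula α :=
  subF j i ⊓ ∼(subF i j) ⊓
    Formula.iAllsO (γ := Fin 1) (id : (α ⊕ Fin 1) → α ⊕ Fin 1)
      ((neA (Sum.inr 0)).imp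
        (∼(subF (Sum.inr 0) (Sum.inl i) ⊓ ∼(subF (Sum.inl i) (Sum.inr 0)) ⊓
           subF (Sum.inl j) (Sum.inr 0) ⊓ ∼(subF (Sum.inr 0) (Sum.inl j)))))

/-- axiom sentences -/
noncomputable def ax1S : LL.Sentence :=
  Formula.iAllsO (γ := Fin 2) (Sum.inr : Fin 2 → Empty ⊕ Fin 2)
    (∼(rf aT (Term.var 0) (Term.var 1)))

noncomputable def axreflS : LL.Sentence :=
  Formula.iAllsO (γ := Fin 2) (Sum.inr : Fin 2 → Empty ⊕ Fin 2)
    ((neA 0).imp (rv 0 1 1))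

noncomputable def axsymmS : LL.Sentence :=
  Formula.iAllsO (γ := Fin 3) (Sum.inr : Fin 3 → Empty ⊕ Fin 3)
    ((neA 0).imp ((rv 0 1 2).imp (rv 0 2 1)))

noncomputable def axtransS : LL.Sentence :=
  Formula.iAllsO (γ := Fin 4) (Sum.inr : Fin 4 → Empty ⊕ Fin 4)
    ((neA 0).imp ((rv 0 1 2).imp ((rv 0 2 3).imp (rv 0 1 3))))

noncomputable def axtotalS : LL.Sentence :=
  Formula.iAllsO (γ := Fin 2) (Sum.inr : Fin 2 → Empty ⊕ Fin 2)
    ((neA 0).imp ((neA 1).imp (subF 0 1 ⊔ subF 1 0)))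

noncomputable def axsepS : LL.Sentence :=
  Formula.iAllsO (γ := Fin 2) (Sum.inr : Fin 2 → Empty ⊕ Fin 2)
    ((∼(Term.equal (Term.var 0) (Term.var 1))).imp
      (Formula.iExsO (γ := Fin 1) (id : (Fin 2 ⊕ Fin 1) → Fin 2 ⊕ Fin 1)
        ((neA (Sum.inr 0)) ⊓ ∼(rv (Sum.inr 0) (Sum.inl 0) (Sum.inl 1)))))

noncomputable def axtopTwoCls : LL.Formula ((Fin 1 ⊕ Fin 1) ⊕ Fin 2) :=
  (∼(rv (Sum.inl (Sum.inr 0)) (Sum.inr 0) (Sum.inr 1))) ⊓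
    (Formula.iAllsO (γ := Fin 1)
      (id : (((Fin 1 ⊕ Fin 1) ⊕ Fin 2) ⊕ Fin 1) → ((Fin 1 ⊕ Fin 1) ⊕ Fin 2) ⊕ Fin 1)
      ((rv (Sum.inl (Sum.inl (Sum.inr 0))) (Sum.inr 0) (Sum.inl (Sum.inr 0))) ⊔
        (rv (Sum.inl (Sum.inl (Sum.inr 0))) (Sum.inr 0) (Sum.inl (Sum.inr 1)))))

noncomputable def axtopInner : LL.Formula (Fin 1 ⊕ Fin 1) :=
  (neA (Sum.inr 0)) ⊓
    (Formula.iAllsO (γ := Fin 1) (id : ((Fin 1 ⊕ Fin 1) ⊕ Fin 1) → (Fin 1 ⊕ Fin 1) ⊕ Fin 1)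
      ((neA (Sum.inr 0)).imp (subF (Sum.inr 0) (Sum.inl (Sum.inr 0))))) ⊓
    (Formula.iExsO (γ := Fin 2) (id : ((Fin 1 ⊕ Fin 1) ⊕ Fin 2) → (Fin 1 ⊕ Fin 1) ⊕ Fin 2)
      axtopTwoCls)

noncomputable def axtopS : LL.Sentence :=
  Formula.iAllsO (γ := Fin 1) (Sum.inr : Fin 1 → Empty ⊕ Fin 1)
    ((neA 0).imp
      (Formula.iExsO (γ := Fin 1) (id : (Fin 1 ⊕ Fin 1) → Fin 1 ⊕ Fin 1) axtopInner))

noncomputable def axsplitS : LL.Sentence :=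
  Formula.iAllsO (γ := Fin 3) (Sum.inr : Fin 3 → Empty ⊕ Fin 3)
    ((neA 0).imp ((neA 1).imp ((succF 0 1).imp
      (Formula.iExsO (γ := Fin 2) (id : (Fin 3 ⊕ Fin 2) → Fin 3 ⊕ Fin 2)
        ((rv (Sum.inl 0) (Sum.inl 2) (Sum.inr 0)) ⊓
         (rv (Sum.inl 0) (Sum.inl 2) (Sum.inr 1)) ⊓
         ∼(rv (Sum.inl 1) (Sum.inr 0) (Sum.inr 1)) ⊓
         (Formula.iAllsO (γ := Fin 1) (id : ((Fin 3 ⊕ Fin 2) ⊕ Fin 1) → (Fin 3 ⊕ Fin 2) ⊕ Fin 1)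
           ((rv (Sum.inl (Sum.inl 0)) (Sum.inl (Sum.inl 2)) (Sum.inr 0)).imp
             ((rv (Sum.inl (Sum.inl 1)) (Sum.inr 0) (Sum.inl (Sum.inr 0))) ⊔
              (rv (Sum.inl (Sum.inl 1)) (Sum.inr 0) (Sum.inl (Sum.inr 1)))))))))))

noncomputable def axal1S : LL.Sentence :=
  Formula.iAllsO (γ := Fin 1) (Sum.inr : Fin 1 → Empty ⊕ Fin 1)
    ((neA 0).imp (∼(rf (Term.var 0) aT (Term.var 0))))

noncomputable def axal2S : LL.Sentence :=
  Formula.iAllsO (γ := Fin 2) (Sum.inr : Fin 2 → Empty ⊕ Fin 2)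
    ((neA 0).imp ((neA 1).imp ((subF 0 1).imp ((∼(subF 1 0)).imp
      (rf (Term.var 1) aT (Term.var 0))))))

/-- the sentence -/
noncomputable def phi : LL.Sentence :=
  ax1S ⊓ axreflS ⊓ axsymmS ⊓ axtransS ⊓ axtotalS ⊓ axsepS ⊓ axtopS ⊓ axsplitS ⊓ axal1S ⊓ axal2S

section Realize

variable {n : ℕ} (c : Fin 1 → Fin n) (S : ∀ k, rels3 k → (Fin k → Fin n) → Prop)

/-- the ternary relation of an interpretation -/
def TofS (S : ∀ k, rels3 k → (Fin k → Fin n) → Prop) : Fin n → Fin n → Fin n → Prop :=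
  fun x u v => S 3 Rsym ![x, u, v]

lemma realize_aT {α : Type} (v : α → Fin n) :
    (letI := cLang.mkStructure c S; Term.realize v (aT : LL.Term α)) = c 0 := rfl

lemma realize_rf {α : Type} (t₁ t₂ t₃ : LL.Term α) (v : α → Fin n) :
    (letI := cLang.mkStructure c S; (rf t₁ t₂ t₃).Realize v) ↔
      (letI := cLang.mkStructure c S;
        S 3 Rsym ![t₁.realize v, t₂.realize v, t₃.realize v]) := by
  letI := cLang.mkStructure c S
  rw [rf, Formula.realize_rel]
  have h : (fun i => Term.realize v (![t₁, t₂, t₃] i)) =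
      ![t₁.realize v, t₂.realize v, t₃.realize v] := by
    funext i; fin_cases i <;> rfl
  rw [show (Structure.RelMap Rsym fun i => Term.realize v (![t₁, t₂, t₃] i)) =
    S 3 Rsym (fun i => Term.realize v (![t₁, t₂, t₃] i)) from rfl, h]

lemma realize_rv {α : Type} (i j k : α) (v : α → Fin n) :
    (letI := cLang.mkStructure c S; (rv i j k).Realize v) ↔ TofS S (v i) (v j) (v k) := by
  rw [rv, realize_rf]
  rfl

lemma realize_neA {α : Type} (i : α) (v : α → Fin n) :
    (letI := cLang.mkStructure c S; (neA i).Realize v) ↔ v i ≠ c 0 := by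
  letI := cLang.mkStructure c S
  rw [neA, Formula.realize_not, Formula.realize_equal, realize_aT]
  simp

lemma realize_subF {α : Type} (i j : α) (v : α → Fin n) :
    (letI := cLang.mkStructure c S; (subF i j).Realize v) ↔
      sub (TofS S (v i)) (TofS S (v j)) := by
  letI := cLang.mkStructure c S
  rw [subF, Formula.realize_iAllsO]
  constructor
  · intro h u w hT
    have h2 := h ![u, w]
    rw [Formula.realize_imp, realize_rv, realize_rv] at h2
    simpa using h2 (by simpa using hT)
  · intro h k
    rw [Formula.realize_imp, realize_rv, realize_rv]
    intro hT
    simpa using h (k 0) (k 1) (by simpa using hT)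

lemma realize_succF {α : Type} (i j : α) (v : α → Fin n) :
    (letI := cLang.mkStructure c S; (succF i j).Realize v) ↔
      succAx (c 0) (TofS S) (v i) (v j) := by
  letI := cLang.mkStructure c S
  rw [succF, Formula.realize_inf, Formula.realize_inf, Formula.realize_not,
    realize_subF, realize_subF, Formula.realize_iAllsO, succAx]
  constructor
  · rintro ⟨⟨h1, h2⟩, h3⟩
    refine ⟨h1, h2, fun y hy hbad => ?_⟩
    have h4 := h3 ![y]
    rw [Formula.realize_imp, realize_neA, Formula.realize_not, Formula.realize_inf,
      Formula.realize_inf, Formula.realize_inf, Formula.realize_not, Formula.realize_not,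
      realize_subF, realize_subF, realize_subF, realize_subF] at h4
    have h5 := h4 (by simpa using hy)
    apply h5
    simpa using ⟨⟨⟨hbad.1, hbad.2.1⟩, hbad.2.2.1⟩, hbad.2.2.2⟩
  · rintro ⟨h1, h2, h3⟩
    refine ⟨⟨h1, h2⟩, fun k => ?_⟩
    rw [Formula.realize_imp, realize_neA, Formula.realize_not, Formula.realize_inf,
      Formula.realize_inf, Formula.realize_inf, Formula.realize_not, Formula.realize_not,
      realize_subF, realize_subF, realize_subF, realize_subF]
    intro hy hbad
    refine h3 (k 0) (by simpa using hy) ?_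
    simpa using ⟨hbad.1.1.1, hbad.1.1.2, hbad.1.2, hbad.2⟩

end Realize

section RealizeAx

variable {n : ℕ} (c : Fin 1 → Fin n) (S : ∀ k, rels3 k → (Fin k → Fin n) → Prop)

lemma realize_ax1S : (letI := cLang.mkStructure c S; Fin n ⊨ ax1S) ↔
    ∀ u v, ¬ TofS S (c 0) u v := by
  letI := cLang.mkStructure c S
  rw [ax1S, Sentence.Realize, Formula.realize_iAllsO]
  constructor
  · intro h u v
    have h2 := h ![u, v]
    rw [Formula.realize_not, realize_rf] at h2
    simpa [TofS, realize_aT] using h2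
  · intro h i
    rw [Formula.realize_not, realize_rf]
    simpa [TofS, realize_aT] using h (i 0) (i 1)

lemma realize_axreflS : (letI := cLang.mkStructure c S; Fin n ⊨ axreflS) ↔
    ∀ x, x ≠ c 0 → ∀ u, TofS S x u u := by
  letI := cLang.mkStructure c S
  rw [axreflS, Sentence.Realize, Formula.realize_iAllsO]
  constructor
  · intro h x hx u
    have h2 := h ![x, u]
    rw [Formula.realize_imp, realize_neA, realize_rv] at h2
    simpa using h2 (by simpa using hx)
  · intro h i
    rw [Formula.realize_imp, realize_neA, realize_rv]
    intro hx
    simpa using h (i 0) (by simpa using hx) (i 1)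

lemma realize_axsymmS : (letI := cLang.mkStructure c S; Fin n ⊨ axsymmS) ↔
    ∀ x, x ≠ c 0 → ∀ u v, TofS S x u v → TofS S x v u := by
  letI := cLang.mkStructure c S
  rw [axsymmS, Sentence.Realize, Formula.realize_iAllsO]
  constructor
  · intro h x hx u v hT
    have h2 := h ![x, u, v]
    rw [Formula.realize_imp, realize_neA, Formula.realize_imp, realize_rv, realize_rv] at h2
    simpa using h2 (by simpa using hx) (by simpa using hT)
  · intro h i
    rw [Formula.realize_imp, realize_neA, Formula.realize_imp, realize_rv, realize_rv]
    intro hx hT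
    simpa using h (i 0) (by simpa using hx) (i 1) (i 2) (by simpa using hT)

lemma realize_axtransS : (letI := cLang.mkStructure c S; Fin n ⊨ axtransS) ↔
    ∀ x, x ≠ c 0 → ∀ u v w, TofS S x u v → TofS S x v w → TofS S x u w := by
  letI := cLang.mkStructure c S
  rw [axtransS, Sentence.Realize, Formula.realize_iAllsO]
  constructor
  · intro h x hx u v w hT hT'
    have h2 := h ![x, u, v, w]
    rw [Formula.realize_imp, realize_neA, Formula.realize_imp, Formula.realize_imp,
      realize_rv, realize_rv, realize_rv] at h2
    simpa using h2 (by simpa using hx) (by simpa using hT) (by simpa using hT')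
  · intro h i
    rw [Formula.realize_imp, realize_neA, Formula.realize_imp, Formula.realize_imp,
      realize_rv, realize_rv, realize_rv]
    intro hx hT hT'
    simpa using h (i 0) (by simpa using hx) (i 1) (i 2) (i 3)
      (by simpa using hT) (by simpa using hT')

lemma realize_axtotalS : (letI := cLang.mkStructure c S; Fin n ⊨ axtotalS) ↔
    ∀ x y, x ≠ c 0 → y ≠ c 0 →
      sub (TofS S x) (TofS S y) ∨ sub (TofS S y) (TofS S x) := by
  letI := cLang.mkStructure c S
  rw [axtotalS, Sentence.Realize, Formula.realize_iAllsO]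
  constructor
  · intro h x y hx hy
    have h2 := h ![x, y]
    rw [Formula.realize_imp, realize_neA, Formula.realize_imp, realize_neA,
      Formula.realize_sup, realize_subF, realize_subF] at h2
    simpa using h2 (by simpa using hx) (by simpa using hy)
  · intro h i
    rw [Formula.realize_imp, realize_neA, Formula.realize_imp, realize_neA,
      Formula.realize_sup, realize_subF, realize_subF]
    intro hx hy
    simpa using h (i 0) (i 1) (by simpa using hx) (by simpa using hy)

lemma realize_axsepS : (letI := cLang.mkStructure c S; Fin n ⊨ axsepS) ↔
    ∀ u v, u ≠ v → ∃ x, x ≠ c 0 ∧ ¬ TofS S x u v := by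
  letI := cLang.mkStructure c S
  rw [axsepS, Sentence.Realize, Formula.realize_iAllsO]
  constructor
  · intro h u v huv
    have h2 := h ![u, v]
    rw [Formula.realize_imp, Formula.realize_not, Formula.realize_equal] at h2
    have h3 := h2 (by simpa using huv)
    rw [Formula.realize_iExsO] at h3
    obtain ⟨k, hk⟩ := h3
    rw [Formula.realize_inf, realize_neA, Formula.realize_not, realize_rv] at hk
    exact ⟨k 0, by simpa using hk.1, by simpa using hk.2⟩
  · intro h i
    rw [Formula.realize_imp, Formula.realize_not, Formula.realize_equal]
    intro huv
    rw [Formula.realize_iExsO]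
    obtain ⟨x, hx, hT⟩ := h (i 0) (i 1) (by simpa using huv)
    refine ⟨![x], ?_⟩
    rw [Formula.realize_inf, realize_neA, Formula.realize_not, realize_rv]
    exact ⟨by simpa using hx, by simpa using hT⟩

lemma realize_axal1S : (letI := cLang.mkStructure c S; Fin n ⊨ axal1S) ↔
    ∀ x, x ≠ c 0 → ¬ TofS S x (c 0) x := by
  letI := cLang.mkStructure c S
  rw [axal1S, Sentence.Realize, Formula.realize_iAllsO]
  constructor
  · intro h x hx
    have h2 := h ![x]
    rw [Formula.realize_imp, realize_neA, Formula.realize_not, realize_rf] at h2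
    simpa [TofS, realize_aT] using h2 (by simpa using hx)
  · intro h i
    rw [Formula.realize_imp, realize_neA, Formula.realize_not, realize_rf]
    intro hx
    simpa [TofS, realize_aT] using h (i 0) (by simpa using hx)

lemma realize_axal2S : (letI := cLang.mkStructure c S; Fin n ⊨ axal2S) ↔
    ∀ x y, x ≠ c 0 → y ≠ c 0 → sub (TofS S x) (TofS S y) → ¬ sub (TofS S y) (TofS S x) →
      TofS S y (c 0) x := by
  letI := cLang.mkStructure c S
  rw [axal2S, Sentence.Realize, Formula.realize_iAllsO]
  constructor
  · intro h x y hx hy hsb hnsb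
    have h2 := h ![x, y]
    rw [Formula.realize_imp, realize_neA, Formula.realize_imp, realize_neA,
      Formula.realize_imp, realize_subF, Formula.realize_imp, Formula.realize_not,
      realize_subF, realize_rf] at h2
    simpa [TofS, realize_aT] using h2 (by simpa using hx) (by simpa using hy) (by simpa using hsb)
      (by simpa using hnsb)
  · intro h i
    rw [Formula.realize_imp, realize_neA, Formula.realize_imp, realize_neA,
      Formula.realize_imp, realize_subF, Formula.realize_imp, Formula.realize_not,
      realize_subF, realize_rf]
    intro hx hy hsb hnsb
    simpa [TofS, realize_aT] using h (i 0) (i 1) (by simpa using hx) (by simpa using hy)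
      (by simpa using hsb) (by simpa using hnsb)

lemma realize_axtopS : (letI := cLang.mkStructure c S; Fin n ⊨ axtopS) ↔
    ∀ y, y ≠ c 0 → ∃ x, x ≠ c 0 ∧ (∀ z, z ≠ c 0 → sub (TofS S z) (TofS S x)) ∧
      twoCls (TofS S x) := by
  letI := cLang.mkStructure c S
  rw [axtopS, Sentence.Realize, Formula.realize_iAllsO]
  constructor
  · intro h y hy
    have h2 := h ![y]
    rw [Formula.realize_imp, realize_neA] at h2
    have h3 := h2 (by simpa using hy)
    rw [Formula.realize_iExsO] at h3
    obtain ⟨k, hk⟩ := h3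
    rw [axtopInner, Formula.realize_inf, Formula.realize_inf, realize_neA,
      Formula.realize_iAllsO, Formula.realize_iExsO] at hk
    obtain ⟨⟨hk1, hk2⟩, w, hk3⟩ := hk
    rw [axtopTwoCls, Formula.realize_inf, Formula.realize_not, realize_rv,
      Formula.realize_iAllsO] at hk3
    refine ⟨k 0, by simpa using hk1, ?_, ?_⟩
    · intro z hz
      have h4 := hk2 ![z]
      rw [Formula.realize_imp, realize_neA, realize_subF] at h4
      simpa using h4 (by simpa using hz)
    · refine ⟨w 0, w 1, by simpa using hk3.1, ?_⟩
      intro t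
      have h5 := hk3.2 ![t]
      rw [Formula.realize_sup, realize_rv, realize_rv] at h5
      simpa using h5
  · intro h i
    rw [Formula.realize_imp, realize_neA]
    intro hy
    obtain ⟨x, hx, hcoarse, u, v, huv, hcov⟩ := h (i 0) (by simpa using hy)
    rw [Formula.realize_iExsO]
    refine ⟨![x], ?_⟩
    rw [axtopInner, Formula.realize_inf, Formula.realize_inf, realize_neA,
      Formula.realize_iAllsO, Formula.realize_iExsO]
    refine ⟨⟨by simpa using hx, ?_⟩, ![u, v], ?_⟩
    · intro k
      rw [Formula.realize_imp, realize_neA, realize_subF]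
      intro hz
      simpa using hcoarse (k 0) (by simpa using hz)
    · rw [axtopTwoCls, Formula.realize_inf, Formula.realize_not, realize_rv,
        Formula.realize_iAllsO]
      refine ⟨by simpa using huv, ?_⟩
      intro k
      rw [Formula.realize_sup, realize_rv, realize_rv]
      simpa using hcov (k 0)

lemma realize_axsplitS : (letI := cLang.mkStructure c S; Fin n ⊨ axsplitS) ↔
    ∀ x x', x ≠ c 0 → x' ≠ c 0 → succAx (c 0) (TofS S) x x' →
      ∀ u, ∃ v w, TofS S x u v ∧ TofS S x u w ∧ ¬ TofS S x' v w ∧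
        ∀ t, TofS S x u t → TofS S x' t v ∨ TofS S x' t w := by
  letI := cLang.mkStructure c S
  rw [axsplitS, Sentence.Realize, Formula.realize_iAllsO]
  constructor
  · intro h x x' hx hx' hsucc u
    have h2 := h ![x, x', u]
    rw [Formula.realize_imp, realize_neA, Formula.realize_imp, realize_neA,
      Formula.realize_imp, realize_succF, Formula.realize_iExsO] at h2
    have h3 := h2 (by simpa using hx) (by simpa using hx') (by simpa using hsucc)
    obtain ⟨k, hk⟩ := h3
    rw [Formula.realize_inf, Formula.realize_inf, Formula.realize_inf, realize_rv,
      realize_rv, Formula.realize_not, realize_rv, Formula.realize_iAllsO] at hk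
    obtain ⟨⟨⟨hk1, hk2⟩, hk3⟩, hk4⟩ := hk
    refine ⟨k 0, k 1, by simpa using hk1, by simpa using hk2, by simpa using hk3, ?_⟩
    intro t hT
    have h5 := hk4 ![t]
    rw [Formula.realize_imp, realize_rv, Formula.realize_sup, realize_rv, realize_rv] at h5
    simpa using h5 (by simpa using hT)
  · intro h i
    rw [Formula.realize_imp, realize_neA, Formula.realize_imp, realize_neA,
      Formula.realize_imp, realize_succF, Formula.realize_iExsO]
    intro hx hx' hsucc
    obtain ⟨v, w, h1, h2, h3, hcov⟩ := h (i 0) (i 1) (by simpa using hx)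
      (by simpa using hx') (by simpa using hsucc) (i 2)
    refine ⟨![v, w], ?_⟩
    rw [Formula.realize_inf, Formula.realize_inf, Formula.realize_inf, realize_rv,
      realize_rv, Formula.realize_not, realize_rv, Formula.realize_iAllsO]
    refine ⟨⟨⟨by simpa using h1, by simpa using h2⟩, by simpa using h3⟩, ?_⟩
    intro k
    rw [Formula.realize_imp, realize_rv, Formula.realize_sup, realize_rv, realize_rv]
    intro hT
    simpa using hcov (k 0) (by simpa using hT)

/-- the full realization lemma -/
lemma realize_phi : (letI := cLang.mkStructure c S; Fin n ⊨ phi) ↔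
    Ax (c 0) (TofS S) := by
  letI := cLang.mkStructure c S
  have hiff : (Fin n ⊨ phi) ↔ ((Fin n ⊨ ax1S) ∧ (Fin n ⊨ axreflS) ∧ (Fin n ⊨ axsymmS) ∧
      (Fin n ⊨ axtransS) ∧ (Fin n ⊨ axtotalS) ∧ (Fin n ⊨ axsepS) ∧ (Fin n ⊨ axtopS) ∧
      (Fin n ⊨ axsplitS) ∧ (Fin n ⊨ axal1S) ∧ (Fin n ⊨ axal2S)) := by
    rw [phi]
    simp only [Sentence.Realize, Formula.realize_inf]
    tauto
  rw [hiff, realize_ax1S, realize_axreflS, realize_axsymmS, realize_axtransS,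
    realize_axtotalS, realize_axsepS, realize_axtopS, realize_axsplitS,
    realize_axal1S, realize_axal2S]
  constructor
  · rintro ⟨h1, h2, h3, h4, h5, h6, h7, h8, h9, h10⟩
    exact ⟨h1, h2, h3, h4, h5, h6, h7, h8, h9, h10⟩
  · rintro ⟨h1, h2, h3, h4, h5, h6, h7, h8, h9, h10⟩
    exact ⟨h1, h2, h3, h4, h5, h6, h7, h8, h9, h10⟩

end RealizeAx

section Final

variable {n : ℕ}

/-- interpretation from a ternary relation -/
def SofT (T : Fin n → Fin n → Fin n → Prop) : ∀ k, rels3 k → (Fin k → Fin n) → Prop :=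
  fun k => match k with
  | 0 => fun r => r.elim
  | 1 => fun r => r.elim
  | 2 => fun r => r.elim
  | 3 => fun _ w => T (w 0) (w 1) (w 2)
  | (_+4) => fun r => r.elim

lemma TofS_SofT (T : Fin n → Fin n → Fin n → Prop) : TofS (SofT T) = T := by
  funext x u v
  show T (![x, u, v] 0) (![x, u, v] 1) (![x, u, v] 2) = T x u v
  simp

lemma SofT_TofS (S : ∀ k, rels3 k → (Fin k → Fin n) → Prop) : SofT (TofS S) = S := by
  funext k r w
  match k, r with
  | 0, r => exact r.elim
  | 1, r => exact r.elim
  | 2, r => exact r.elim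
  | 3, r =>
    show S 3 Rsym ![w 0, w 1, w 2] = S 3 r w
    have h1 : r = Rsym := by
      have : Subsingleton (Fin 1) := inferInstance
      exact Subsingleton.elim (α := Fin 1) r Rsym
    have h2 : ![w 0, w 1, w 2] = w := by
      funext i; fin_cases i <;> rfl
    rw [h1, h2]
  | (k+4), r => exact r.elim

/-- the last element -/
def lastF (n : ℕ) (hn : 0 < n) : Fin n := ⟨n - 1, by omega⟩

/-- the counted type of `gCount` is equivalent to the abstract models -/
noncomputable def gCountEquiv (hn : 0 < n) :
    { p : (∀ k, rels3 k → (Fin k → Fin n) → Prop) × (Fin 1 → Fin n) //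
      ((p.2 0 : ℕ) + 1 = n) ∧
      (letI := cLang.mkStructure p.2 p.1
       Fin n ⊨ phi) } ≃ Mdl (Fin n) (lastF n hn) where
  toFun p := ⟨TofS p.1.1, by
    have hpt : p.1.2 0 = lastF n hn := by
      have := p.2.1
      apply Fin.ext
      show ((p.1.2 0 : Fin n) : ℕ) = n - 1
      omega
    have hax := (realize_phi p.1.2 p.1.1).1 p.2.2
    rwa [hpt] at hax⟩
  invFun T := ⟨⟨SofT T.1, fun _ => lastF n hn⟩, by
    constructor
    · show (n - 1) + 1 = n
      omega
    · refine (realize_phi _ _).2 ?_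
      rw [TofS_SofT]
      exact T.2⟩
  left_inv p := by
    refine Subtype.ext (Prod.ext ?_ ?_)
    · exact SofT_TofS p.1.1
    · funext i
      have h0 : i = 0 := Subsingleton.elim i 0
      rw [h0]
      have := p.2.1
      apply Fin.ext
      show (n - 1 : ℕ) = ((p.1.2 0 : Fin n) : ℕ)
      omega
  right_inv T := Subtype.ext (TofS_SofT T.1)

lemma gCount_phi_eq (hn : 0 < n) :
    gCount phi n = Nat.card (Mdl (Fin n) (lastF n hn)) :=
  Nat.card_congr (gCountEquiv hn)

lemma gCount_phi_zero : gCount phi 0 = 0 := by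
  have : IsEmpty { p : (∀ k, rels3 k → (Fin k → Fin 0) → Prop) × (Fin 1 → Fin 0) //
      ((p.2 0 : ℕ) + 1 = 0) ∧
      (letI := cLang.mkStructure p.2 p.1
       Fin 0 ⊨ phi) } := ⟨fun p => (p.1.2 0).elim0⟩
  exact Nat.card_of_isEmpty

lemma gCount_phi_not_pow (hn : ¬ ∃ m : ℕ, n = 2 ^ m) : gCount phi n = 0 := by
  rcases Nat.eq_zero_or_pos n with rfl | hpos
  · exact gCount_phi_zero
  · rw [gCount_phi_eq hpos]
    have hE : IsEmpty (Mdl (Fin n) (lastF n hpos)) := by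
      constructor
      intro Tm
      refine hn ?_
      have hcard : Nat.card (Fin n) = n := by
        rw [Nat.card_eq_fintype_card, Fintype.card_fin]
      exact spec_pow n (Fin n) (lastF n hpos) Tm.1 Tm.2 hcard
    exact Nat.card_of_isEmpty

lemma gCount_phi_pow (m : ℕ) : gCount phi (2 ^ m) ≡ 1 [MOD 2] := by
  have hpos : 0 < 2 ^ m := Nat.pow_pos (by norm_num)
  rw [gCount_phi_eq hpos]
  have hodd := mdl_card_odd m (Fin (2 ^ m)) (lastF (2 ^ m) hpos)
    (by rw [Nat.card_eq_fintype_card, Fintype.card_fin])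
  rw [Nat.odd_iff] at hodd
  show _ % 2 = 1 % 2
  simpa using hodd

lemma gCount_phi_not_period :
    ¬ ∃ r p : ℕ, 1 ≤ p ∧ ∀ k : ℕ, r ≤ k → gCount phi (k + p) ≡ gCount phi k [MOD 2] := by
  rintro ⟨r, p, hp, h⟩
  set m := r + p + 1 with hm
  have hrm : r ≤ 2 ^ m := le_trans (by omega) (Nat.le_of_lt (Nat.lt_two_pow_self (n := m)))
  have hpm : p < 2 ^ m := lt_of_lt_of_le (by omega) (Nat.le_of_lt (Nat.lt_two_pow_self (n := m)))
  have h1 := h (2 ^ m) hrm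
  have h2 := gCount_phi_pow m
  have h3 : gCount phi (2 ^ m + p) ≡ 1 [MOD 2] := h1.trans h2
  have h4 : gCount phi (2 ^ m + p) ≠ 0 := by
    intro h0
    rw [h0] at h3
    exact absurd h3.symm (by decide)
  have h5 : ∃ k : ℕ, 2 ^ m + p = 2 ^ k := by
    by_contra hc
    exact h4 (gCount_phi_not_pow hc)
  obtain ⟨k, hk⟩ := h5
  have hmk : m < k := by
    have : 2 ^ m < 2 ^ k := by omega
    exact (Nat.pow_lt_pow_iff_right (by norm_num)).1 this
  have : 2 ^ (m + 1) ≤ 2 ^ k := Nat.pow_le_pow_right (by norm_num) (by omega)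
  have h2m : 2 ^ (m + 1) = 2 * 2 ^ m := by ring
  omega

end Final

end Logic

end TernaryCE

/-- **Ternary relation counterexample with a hard-wired constant.**
There is a first-order sentence φ over the vocabulary with one constant symbol and one
ternary relation symbol such that g(n) = 0 whenever n is not a power of 2, and
g(n) ≡ 1 (mod 2) whenever n = 2^m.  In particular n ↦ g(n) mod 2 is not ultimately
periodic, so g is not MC-finite. -/
theorem ternary_counterexample_with_constant :
    ∃ φ : (cLang 1 rels3).Sentence,
      (∀ n : ℕ, (¬ ∃ m : ℕ, n = 2 ^ m) → gCount φ n = 0) ∧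
      (∀ m : ℕ, gCount φ (2 ^ m) ≡ 1 [MOD 2]) ∧
      (¬ ∃ r p : ℕ, 1 ≤ p ∧ ∀ n : ℕ, r ≤ n → gCount φ (n + p) ≡ gCount φ n [MOD 2]) ∧
      ¬ MCFinite (gCount φ) := by
  refine ⟨TernaryCE.phi, fun n hn => TernaryCE.gCount_phi_not_pow hn,
    TernaryCE.gCount_phi_pow, TernaryCE.gCount_phi_not_period, ?_⟩
  intro hMC
  exact TernaryCE.gCount_phi_not_period (hMC 2 (le_refl 2))
end

section
/- For every prime number p there exists a first-order sentence φ_p over the vocabulary consisting of one constant symbol a and one ternary relation symbol R with the following property: letting g_p(n) denote the number of interpretations of R on the universe [n] = {1,…,n} that satisfy φ_p when the constant a is interpreted as the fixed element n, one has g_p(n) = 0 for every n that is not a power of p, and g_p(n) ≡ 1 (mod p) whenever n = p^m for some m ∈ ℕ. In particular, n ↦ g_p(n) mod p is not ultimately periodic. -/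
open FirstOrder Language

namespace Cex

variable {α : Type}
def Sub (R : α → α → α → Prop) (z w : α) : Prop := ∀ x y, R z x y → R w x y
def ExactP (p : ℕ) (R : α → α → α → Prop) (z w x : α) : Prop :=
  ∃ y : Fin p → α, (∀ i, R z x (y i)) ∧ (∀ i j, i ≠ j → ¬ R w (y i) (y j)) ∧
    ∀ u, R z x u → ∃ i, R w u (y i)
def Guard (R : α → α → α → Prop) (z w : α) : Prop :=
  Sub R w z ∧ ¬ Sub R z w ∧
    ¬ ∃ v, Sub R w v ∧ Sub R v z ∧ ¬ Sub R v w ∧ ¬ Sub R z v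
structure Valid (p : ℕ) (R : α → α → α → Prop) (a : α) : Prop where
  refl : ∀ z x, R z x x
  symm : ∀ z x y, R z x y → R z y x
  trans : ∀ z x y u, R z x y → R z y u → R z x u
  total : ∀ z w, Sub R z w ∨ Sub R w z
  bot : ∀ x y, R a x y → x = y
  rela : ∀ z, R z z a
  min : ∀ z w, R w z a → Sub R z w
  split : ∀ z w x, Guard R z w → ExactP p R z w x
def Penult (R : α → α → α → Prop) (s : Setoid α) (a : α) : Prop :=
  (∃ z₁, z₁ ≠ a ∧ ∀ x y, R z₁ x y ↔ s.r x y) ∧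
    (∀ z, z ≠ a → ∀ x y, s.r x y → R z x y)
/-- In a finite nonempty type, a total transitive relation has a bottom element. -/
lemma exists_bot_of_total {β : Type} [Finite β] [Nonempty β] (r : β → β → Prop)
    (htot : ∀ x y, r x y ∨ r y x) (htr : ∀ x y z, r x y → r y z → r x z) :
    ∃ b, ∀ x, r b x := by
  classical
  cases nonempty_fintype β
  have key : ∀ s : Finset β, s.Nonempty → ∃ b ∈ s, ∀ x ∈ s, r b x := by
    intro s hs
    induction hs using Finset.Nonempty.cons_induction with
    | singleton a =>
        refine ⟨a, Finset.mem_singleton_self a, ?_⟩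
        intro x hx
        rw [Finset.mem_singleton] at hx
        subst hx
        rcases htot x x with h | h <;> exact h
    | cons a s ha hs ih =>
        obtain ⟨b, hb, hball⟩ := ih
        rcases htot a b with h | h
        · refine ⟨a, Finset.mem_cons_self a s, ?_⟩
          intro x hx
          rcases Finset.mem_cons.mp hx with rfl | hx
          · rcases htot x x with h' | h' <;> exact h'
          · exact htr _ _ _ h (hball _ hx)
        · refine ⟨b, Finset.mem_cons.mpr (Or.inr hb), ?_⟩
          intro x hx
          rcases Finset.mem_cons.mp hx with rfl | hx
          · exact h
          · exact hball _ hx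
  obtain ⟨b, _, h⟩ := key Finset.univ ⟨Classical.arbitrary β, Finset.mem_univ _⟩
  exact ⟨b, fun x => h x (Finset.mem_univ x)⟩

section Decomp
variable {p : ℕ} {R : α → α → α → Prop} {a : α} {s : Setoid α}
lemma sub_a_iff (hV : Valid p R a) {z : α} : Sub R z a ↔ z = a :=
  ⟨fun h => hV.bot _ _ (h _ _ (hV.rela z)), fun h => h ▸ fun _ _ hxy => hxy⟩
lemma a_sub (hV : Valid p R a) (z : α) : Sub R a z := fun x y h =>
  (hV.bot _ _ h) ▸ hV.refl _ _
lemma not_rel_a_ne {a : α} (hpen : Penult R s a) {z : α} (h : ¬ s.r z a) : z ≠ a := by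
  rintro rfl; exact h (s.refl _)
lemma slice_eq_of_rel (hV : Valid p R a) (hpen : Penult R s a) {z : α}
    (hz : z ≠ a) (hza : s.r z a) : ∀ x y, R z x y ↔ s.r x y := by
  obtain ⟨z₁, hz₁a, hz₁⟩ := hpen.1
  intro x y
  exact ⟨fun h => (hz₁ x y).mp (hV.min z z₁ ((hz₁ z a).mpr hza) x y h), hpen.2 z hz x y⟩
lemma guard_bot (hV : Valid p R a) (hpen : Penult R s a) {z : α}
    (hz : z ≠ a) (hza : s.r z a) : Guard R z a := by
  refine ⟨a_sub hV z, fun h => hz ((sub_a_iff hV).mp h), ?_⟩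
  rintro ⟨v, _, hvz, hva, hzv⟩
  have hv : v ≠ a := fun h => hva (h ▸ fun _ _ hxy => hxy)
  refine hzv fun x y hxy => ?_
  exact hpen.2 v hv x y ((slice_eq_of_rel hV hpen hz hza x y).mp hxy)

/-- Each block of the penultimate setoid has exactly `p` elements. -/
lemma pen_block (hV : Valid p R a) (hpen : Penult R s a) (x : α) :
    Nat.card {y // s.r x y} = p := by
  obtain ⟨z₁, hz₁a, hz₁⟩ := hpen.1
  obtain ⟨y, hy1, hy2, hy3⟩ := hV.split z₁ a x
    (guard_bot hV hpen hz₁a ((hz₁ z₁ a).mp (hV.rela z₁)))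
  have hbij : Function.Bijective
      (fun i : Fin p => (⟨y i, (hz₁ x (y i)).mp (hy1 i)⟩ : {y // s.r x y})) := by
    constructor
    · intro i j hij
      by_contra hne
      have hval : y i = y j := congrArg Subtype.val hij
      exact hy2 i j hne (hval ▸ hV.refl a (y i))
    · rintro ⟨u, hu⟩
      obtain ⟨i, hi⟩ := hy3 u ((hz₁ x u).mpr hu)
      exact ⟨i, by simp [hV.bot _ _ hi]⟩
  rw [← Nat.card_eq_of_bijective _ hbij, Nat.card_eq_fintype_card, Fintype.card_fin]

def Jn (R : α → α → α → Prop) (s : Setoid α) (z x y : α) : Prop := R z x y ∨ s.r x y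
lemma j_eq_of_rel (hV : Valid p R a) (hpen : Penult R s a) {z : α} (hza : s.r z a) :
    ∀ x y, Jn R s z x y ↔ s.r x y := by
  intro x y
  by_cases hz : z = a
  · subst hz
    exact ⟨fun h => h.elim (fun h' => (hV.bot _ _ h') ▸ s.refl _) id, Or.inr⟩
  · exact ⟨fun h => h.elim (fun h' => (slice_eq_of_rel hV hpen hz hza x y).mp h') id, Or.inr⟩
lemma j_eq_of_not (hV : Valid p R a) (hpen : Penult R s a) {z : α} (hza : ¬ s.r z a) :
    ∀ x y, Jn R s z x y ↔ R z x y := fun x y =>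
  ⟨fun h => h.elim id (hpen.2 z (not_rel_a_ne hpen hza) x y), Or.inl⟩
def Rq (R : α → α → α → Prop) (s : Setoid α) (q r t : Quotient s) : Prop :=
  Jn R s q.out r.out t.out
lemma mk_eq_mk {s : Setoid α} {x y : α} : Quotient.mk s x = Quotient.mk s y ↔ s.r x y :=
  ⟨Quotient.exact, Quotient.sound⟩
lemma out_rel (s : Setoid α) (x : α) : s.r (Quotient.mk s x).out x :=
  mk_eq_mk.mp (Quotient.out_eq _)
lemma slice_eq_of_rel_pair (hV : Valid p R a) (hpen : Penult R s a) {z₁ z₂ : α}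
    (h12 : s.r z₁ z₂) (h1 : ¬ s.r z₁ a) : Sub R z₂ z₁ := by
  have hz₁ : z₁ ≠ a := not_rel_a_ne hpen h1
  have hr : R z₁ z₂ a := hV.trans z₁ z₂ z₁ a (hV.symm _ _ _ (hpen.2 z₁ hz₁ z₁ z₂ h12)) (hV.rela z₁)
  exact hV.min z₂ z₁ hr
lemma j_congr_z (hV : Valid p R a) (hpen : Penult R s a) {z₁ z₂ : α} (h12 : s.r z₁ z₂) :
    ∀ x y, Jn R s z₁ x y ↔ Jn R s z₂ x y := by
  intro x y
  by_cases h1 : s.r z₁ a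
  · have h2 : s.r z₂ a := s.trans (s.symm h12) h1
    rw [j_eq_of_rel hV hpen h1, j_eq_of_rel hV hpen h2]
  · have h2 : ¬ s.r z₂ a := fun h => h1 (s.trans h12 h)
    rw [j_eq_of_not hV hpen h1, j_eq_of_not hV hpen h2]
    exact ⟨fun h => slice_eq_of_rel_pair hV hpen (s.symm h12) h2 x y h,
      fun h => slice_eq_of_rel_pair hV hpen h12 h1 x y h⟩
lemma j_congr_xy (hV : Valid p R a) (hpen : Penult R s a) {z x₁ x₂ y₁ y₂ : α}
    (hx : s.r x₁ x₂) (hy : s.r y₁ y₂) : Jn R s z x₁ y₁ ↔ Jn R s z x₂ y₂ := by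
  by_cases h1 : s.r z a
  · rw [j_eq_of_rel hV hpen h1, j_eq_of_rel hV hpen h1]
    exact ⟨fun h => s.trans (s.symm hx) (s.trans h hy), fun h => s.trans hx (s.trans h (s.symm hy))⟩
  · have hz : z ≠ a := not_rel_a_ne hpen h1
    rw [j_eq_of_not hV hpen h1, j_eq_of_not hV hpen h1]
    have hx' := hpen.2 z hz _ _ hx
    have hy' := hpen.2 z hz _ _ hy
    exact ⟨fun h => hV.trans _ _ _ _ (hV.symm _ _ _ hx') (hV.trans _ _ _ _ h hy'),
      fun h => hV.trans _ _ _ _ hx' (hV.trans _ _ _ _ h (hV.symm _ _ _ hy'))⟩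
lemma Rq_mk (hV : Valid p R a) (hpen : Penult R s a) {z x y : α} :
    Rq R s (Quotient.mk s z) (Quotient.mk s x) (Quotient.mk s y) ↔ Jn R s z x y := by
  unfold Rq
  rw [j_congr_z hV hpen (out_rel s z)]
  exact j_congr_xy hV hpen (out_rel s x) (out_rel s y)
lemma sub_q_iff (hV : Valid p R a) (hpen : Penult R s a) {z w : α} :
    Sub (Rq R s) (Quotient.mk s z) (Quotient.mk s w) ↔
      (∀ x y, Jn R s z x y → Jn R s w x y) := by
  constructor
  · intro h x y hxy
    exact (Rq_mk hV hpen).mp (h _ _ ((Rq_mk hV hpen).mpr hxy))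
  · intro h r t
    induction r using Quotient.ind with | _ x =>
    induction t using Quotient.ind with | _ y =>
    intro hxy
    exact (Rq_mk hV hpen).mpr (h x y ((Rq_mk hV hpen).mp hxy))

/-- Validity passes to the quotient. -/
lemma valid_q (hV : Valid p R a) (hpen : Penult R s a) :
    Valid p (Rq R s) (Quotient.mk s a) := by
  obtain ⟨z₁, hz₁a, hz₁⟩ := hpen.1
  have hsz₁ : s.r z₁ a := (hz₁ z₁ a).mp (hV.rela z₁)
  constructor
  · intro q r
    induction q using Quotient.ind with | _ z =>
    induction r using Quotient.ind with | _ x =>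
    exact (Rq_mk hV hpen).mpr (Or.inl (hV.refl z x))
  · intro q r t
    induction q using Quotient.ind with | _ z =>
    induction r using Quotient.ind with | _ x =>
    induction t using Quotient.ind with | _ y =>
    intro h
    have h' := (Rq_mk hV hpen).mp h
    exact (Rq_mk hV hpen).mpr (h'.elim (fun h'' => Or.inl (hV.symm _ _ _ h''))
      (fun h'' => Or.inr (s.symm h'')))
  · intro q r t u
    induction q using Quotient.ind with | _ z =>
    induction r using Quotient.ind with | _ x =>
    induction t using Quotient.ind with | _ y =>
    induction u using Quotient.ind with | _ v =>
    intro h1 h2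
    have h1' := (Rq_mk hV hpen).mp h1
    have h2' := (Rq_mk hV hpen).mp h2
    refine (Rq_mk hV hpen).mpr ?_
    by_cases hz : s.r z a
    · rw [j_eq_of_rel hV hpen hz] at *
      exact s.trans h1' h2'
    · rw [j_eq_of_not hV hpen hz] at h1' h2' ⊢
      exact hV.trans _ _ _ _ h1' h2'
  · intro q r
    induction q using Quotient.ind with | _ z =>
    induction r using Quotient.ind with | _ w =>
    rcases hV.total z w with h | h
    · left
      refine (sub_q_iff hV hpen).mpr ?_
      rintro x y (hxy | hxy)
      · exact Or.inl (h x y hxy)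
      · exact Or.inr hxy
    · right
      refine (sub_q_iff hV hpen).mpr ?_
      rintro x y (hxy | hxy)
      · exact Or.inl (h x y hxy)
      · exact Or.inr hxy
  · intro r t
    induction r using Quotient.ind with | _ x =>
    induction t using Quotient.ind with | _ y =>
    intro h
    have h' := (Rq_mk hV hpen).mp h
    exact Quotient.sound ((j_eq_of_rel hV hpen (s.refl a) x y).mp h')
  · intro q
    induction q using Quotient.ind with | _ z =>
    exact (Rq_mk hV hpen).mpr (Or.inl (hV.rela z))
  · intro q r
    induction q using Quotient.ind with | _ z =>
    induction r using Quotient.ind with | _ w =>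
    intro h
    have h' := (Rq_mk hV hpen).mp h
    refine (sub_q_iff hV hpen).mpr ?_
    rcases h' with h' | h'
    · have hsub := hV.min z w h'
      rintro x y (hxy | hxy)
      · exact Or.inl (hsub x y hxy)
      · exact Or.inr hxy
    · intro x y hxy
      rw [j_eq_of_rel hV hpen h'] at hxy
      exact Or.inr hxy
  · -- split
    intro q r t hguard
    induction q using Quotient.ind with | _ z =>
    induction r using Quotient.ind with | _ w =>
    induction t using Quotient.ind with | _ x =>
    obtain ⟨hg1, hg2, hg3⟩ := hguard
    rw [sub_q_iff hV hpen] at hg1 hg2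
    -- z's slice is not among s-classes
    have hznr : ¬ s.r z a := by
      intro hz
      refine hg2 fun x y hxy => ?_
      rw [j_eq_of_rel hV hpen hz] at hxy
      exact Or.inr hxy
    have hzne : z ≠ a := not_rel_a_ne hpen hznr
    by_cases hw : s.r w a
    · -- quotient-bottom case: use the pair (z, z₁) downstairs
      have hguardR : Guard R z z₁ := by
        refine ⟨?_, ?_, ?_⟩
        · intro x y hxy
          exact hpen.2 z hzne x y ((hz₁ x y).mp hxy)
        · intro hsub
          refine hg2 fun x y hxy => ?_
          rw [j_eq_of_not hV hpen hznr] at hxy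
          rw [j_eq_of_rel hV hpen hw]
          exact (hz₁ x y).mp (hsub x y hxy)
        · rintro ⟨v, hv1, hv2, hv3, hv4⟩
          have hvnr : ¬ s.r v a := by
            intro hva
            by_cases hvea : v = a
            · subst hvea
              exact hv3 (fun x y hxy => (hz₁ x y).mpr ((slice_eq_of_rel hV hpen hz₁a hsz₁ x y).mp ((a_sub hV z₁) x y hxy)))
            · exact hv3 fun x y hxy => (hz₁ x y).mpr ((slice_eq_of_rel hV hpen hvea hva x y).mp hxy)
          refine hg3 ⟨Quotient.mk s v, ?_, ?_, ?_, ?_⟩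
          · refine (sub_q_iff hV hpen).mpr fun x y hxy => ?_
            rw [j_eq_of_rel hV hpen hw] at hxy
            rw [j_eq_of_not hV hpen hvnr]
            exact hpen.2 v (not_rel_a_ne hpen hvnr) x y hxy
          · refine (sub_q_iff hV hpen).mpr fun x y hxy => ?_
            rw [j_eq_of_not hV hpen hvnr] at hxy
            rw [j_eq_of_not hV hpen hznr]
            exact hv2 x y hxy
          · intro hsub
            rw [sub_q_iff hV hpen] at hsub
            refine hv3 fun x y hxy => ?_
            have := hsub x y ((j_eq_of_not hV hpen hvnr x y).mpr hxy)
            rw [j_eq_of_rel hV hpen hw] at this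
            exact (hz₁ x y).mpr this
          · intro hsub
            rw [sub_q_iff hV hpen] at hsub
            refine hv4 fun x y hxy => ?_
            have := hsub x y ((j_eq_of_not hV hpen hznr x y).mpr hxy)
            rw [j_eq_of_not hV hpen hvnr] at this
            exact this
      obtain ⟨y, hy1, hy2, hy3⟩ := hV.split z z₁ x hguardR
      refine ⟨fun i => Quotient.mk s (y i), fun i => ?_, fun i j hij => ?_, ?_⟩
      · exact (Rq_mk hV hpen).mpr (Or.inl (hy1 i))
      · intro hmem
        have := (Rq_mk hV hpen).mp hmem
        rw [j_eq_of_rel hV hpen hw] at this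
        exact hy2 i j hij ((hz₁ _ _).mpr this)
      · intro u
        induction u using Quotient.ind with | _ u =>
        intro hu
        have hu' := (Rq_mk hV hpen).mp hu
        rw [j_eq_of_not hV hpen hznr] at hu'
        obtain ⟨i, hi⟩ := hy3 u hu'
        refine ⟨i, (Rq_mk hV hpen).mpr ?_⟩
        rw [j_eq_of_rel hV hpen hw]
        exact (hz₁ _ _).mp hi
    · -- generic case: use the pair (z, w) downstairs
      have hwne : w ≠ a := not_rel_a_ne hpen hw
      have hguardR : Guard R z w := by
        refine ⟨?_, ?_, ?_⟩
        · intro x y hxy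
          have := hg1 x y (Or.inl hxy)
          rw [j_eq_of_not hV hpen hznr] at this
          exact this
        · intro hsub
          exact hg2 fun x y hxy => hxy.elim (fun h => Or.inl (hsub x y h)) Or.inr
        · rintro ⟨v, hv1, hv2, hv3, hv4⟩
          have hvnr : ¬ s.r v a := by
            intro hva
            by_cases hvea : v = a
            · subst hvea
              exact hv3 (a_sub hV w)
            · exact hv3 fun x y hxy => hpen.2 w hwne x y ((slice_eq_of_rel hV hpen hvea hva x y).mp hxy)
          refine hg3 ⟨Quotient.mk s v, ?_, ?_, ?_, ?_⟩
          · refine (sub_q_iff hV hpen).mpr fun x y hxy => ?_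
            exact hxy.elim (fun h => Or.inl (hv1 x y h)) Or.inr
          · refine (sub_q_iff hV hpen).mpr fun x y hxy => ?_
            exact hxy.elim (fun h => Or.inl (hv2 x y h)) Or.inr
          · intro hsub
            rw [sub_q_iff hV hpen] at hsub
            refine hv3 fun x y hxy => ?_
            have := hsub x y (Or.inl hxy)
            rw [j_eq_of_not hV hpen hw] at this
            exact this
          · intro hsub
            rw [sub_q_iff hV hpen] at hsub
            refine hv4 fun x y hxy => ?_
            have := hsub x y (Or.inl hxy)
            rw [j_eq_of_not hV hpen hvnr] at this
            exact this
      obtain ⟨y, hy1, hy2, hy3⟩ := hV.split z w x hguardR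
      refine ⟨fun i => Quotient.mk s (y i), fun i => ?_, fun i j hij => ?_, ?_⟩
      · exact (Rq_mk hV hpen).mpr (Or.inl (hy1 i))
      · intro hmem
        have := (Rq_mk hV hpen).mp hmem
        rw [j_eq_of_not hV hpen hw] at this
        exact hy2 i j hij this
      · intro u
        induction u using Quotient.ind with | _ u =>
        intro hu
        have hu' := (Rq_mk hV hpen).mp hu
        rw [j_eq_of_not hV hpen hznr] at hu'
        obtain ⟨i, hi⟩ := hy3 u hu'
        exact ⟨i, (Rq_mk hV hpen).mpr (Or.inl hi)⟩
end Decomp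

section Recon

variable {p : ℕ} {a : α} {s : Setoid α}

/-- Reconstruction of a relation on `α` from the quotient data. -/
def recR (s : Setoid α) (R' : Quotient s → Quotient s → Quotient s → Prop) (a : α) :
    α → α → α → Prop := fun z x y =>
  (z = a ∧ x = y) ∨ (z ≠ a ∧ s.r z a ∧ s.r x y) ∨
    (¬ s.r z a ∧ R' (Quotient.mk s z) (Quotient.mk s x) (Quotient.mk s y))

variable {R' : Quotient s → Quotient s → Quotient s → Prop}

lemma rec_a {x y : α} : recR s R' a a x y ↔ x = y := by
  constructor
  · rintro (⟨_, h⟩ | ⟨h, _, _⟩ | ⟨h, _⟩)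
    · exact h
    · exact absurd rfl h
    · exact absurd (s.refl a) h
  · intro h; exact Or.inl ⟨rfl, h⟩

lemma rec_mid {z x y : α} (hz : z ≠ a) (hza : s.r z a) :
    recR s R' a z x y ↔ s.r x y := by
  constructor
  · rintro (⟨h, _⟩ | ⟨_, _, h⟩ | ⟨h, _⟩)
    · exact absurd h hz
    · exact h
    · exact absurd hza h
  · intro h; exact Or.inr (Or.inl ⟨hz, hza, h⟩)

lemma rec_top {z x y : α} (hz : ¬ s.r z a) :
    recR s R' a z x y ↔ R' (Quotient.mk s z) (Quotient.mk s x) (Quotient.mk s y) := by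
  have hza : z ≠ a := by rintro rfl; exact hz (s.refl _)
  constructor
  · rintro (⟨h, _⟩ | ⟨_, h, _⟩ | ⟨_, h⟩)
    · exact absurd h hza
    · exact absurd h hz
    · exact h
  · intro h; exact Or.inr (Or.inr ⟨hz, h⟩)

lemma Ra_iff (hV' : Valid p R' (Quotient.mk s a)) {r t : Quotient s} :
    R' (Quotient.mk s a) r t ↔ r = t :=
  ⟨fun h => hV'.bot _ _ h, fun h => h ▸ hV'.refl _ _⟩

lemma mu_sub_R' (hV' : Valid p R' (Quotient.mk s a)) {x y : α} (q : Quotient s)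
    (h : s.r x y) : R' q (Quotient.mk s x) (Quotient.mk s y) := by
  have hxy : Quotient.mk s x = Quotient.mk s y := Quotient.sound h
  rw [hxy]; exact hV'.refl _ _

lemma hrefl_rec (hV' : Valid p R' (Quotient.mk s a)) : ∀ z x, recR s R' a z x x := by
  intro z x
  by_cases hz : z = a
  · subst hz; exact rec_a.mpr rfl
  · by_cases hza : s.r z a
    · exact (rec_mid hz hza).mpr (s.refl x)
    · exact (rec_top hza).mpr (hV'.refl _ _)

lemma hrela_rec (hV' : Valid p R' (Quotient.mk s a)) : ∀ z, recR s R' a z z a := by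
  intro z
  by_cases hz : z = a
  · subst hz; exact rec_a.mpr rfl
  · by_cases hza : s.r z a
    · exact (rec_mid hz hza).mpr hza
    · exact (rec_top hza).mpr (hV'.rela _)

lemma mu_sub_rec (hV' : Valid p R' (Quotient.mk s a)) {z : α} (hz : z ≠ a) :
    ∀ x y, s.r x y → recR s R' a z x y := by
  intro x y h
  by_cases hza : s.r z a
  · exact (rec_mid hz hza).mpr h
  · exact (rec_top hza).mpr (mu_sub_R' hV' _ h)

lemma a_sub_rec (hV' : Valid p R' (Quotient.mk s a)) {w : α} : Sub (recR s R' a) a w := by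
  intro x y h
  rw [rec_a] at h
  subst h
  exact hrefl_rec hV' w x

lemma sub_rec_TT (hV' : Valid p R' (Quotient.mk s a)) {z w : α}
    (hz : ¬ s.r z a) (hw : ¬ s.r w a) :
    Sub (recR s R' a) z w ↔ Sub R' (Quotient.mk s z) (Quotient.mk s w) := by
  constructor
  · intro h r t
    induction r using Quotient.ind with | _ x =>
    induction t using Quotient.ind with | _ y =>
    intro hxy
    exact (rec_top hw).mp (h x y ((rec_top hz).mpr hxy))
  · intro h x y hxy
    exact (rec_top hw).mpr (h _ _ ((rec_top hz).mp hxy))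

lemma exists_sibling (hp2 : 2 ≤ p) (hblock : ∀ x, Nat.card {y // s.r x y} = p) :
    ∃ z₁ : α, z₁ ≠ a ∧ s.r z₁ a := by
  have hpos : 0 < Nat.card {y // s.r a y} := by rw [hblock a]; omega
  rw [Nat.card_pos_iff] at hpos
  haveI := hpos.1
  haveI := hpos.2
  letI := Fintype.ofFinite {y // s.r a y}
  have hca : 1 < Fintype.card {y // s.r a y} := by
    rw [← Nat.card_eq_fintype_card, hblock a]; omega
  obtain ⟨y, hy⟩ := Fintype.exists_ne_of_one_lt_card hca ⟨a, s.refl a⟩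
  refine ⟨y.1, fun h => hy (Subtype.ext h), s.symm y.2⟩

lemma pen_rec (hV' : Valid p R' (Quotient.mk s a)) (hp2 : 2 ≤ p)
    (hblock : ∀ x, Nat.card {y // s.r x y} = p) :
    Penult (recR s R' a) s a := by
  obtain ⟨z₁, hz₁a, hz₁⟩ := exists_sibling (a := a) hp2 hblock
  exact ⟨⟨z₁, hz₁a, fun x y => rec_mid hz₁a hz₁⟩, fun z hz => mu_sub_rec hV' hz⟩

/-- The reconstructed relation is valid. -/
lemma valid_rec (hV' : Valid p R' (Quotient.mk s a)) (hp2 : 2 ≤ p)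
    (hblock : ∀ x, Nat.card {y // s.r x y} = p) :
    Valid p (recR s R' a) a := by
  obtain ⟨z₁, hz₁a, hz₁⟩ := exists_sibling (a := a) hp2 hblock
  constructor
  · exact hrefl_rec hV'
  · -- symm
    intro z x y h
    by_cases hz : z = a
    · subst hz; rw [rec_a] at h ⊢; exact h.symm
    · by_cases hza : s.r z a
      · rw [rec_mid hz hza] at h ⊢; exact s.symm h
      · rw [rec_top hza] at h ⊢; exact hV'.symm _ _ _ h
  · -- trans
    intro z x y u h1 h2
    by_cases hz : z = a
    · subst hz; rw [rec_a] at h1 h2 ⊢; exact h1.trans h2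
    · by_cases hza : s.r z a
      · rw [rec_mid hz hza] at h1 h2 ⊢; exact s.trans h1 h2
      · rw [rec_top hza] at h1 h2 ⊢; exact hV'.trans _ _ _ _ h1 h2
  · -- total
    intro z w
    by_cases hz : z = a
    · subst hz; exact Or.inl (a_sub_rec hV')
    · by_cases hw : w = a
      · subst hw; exact Or.inr (a_sub_rec hV')
      · by_cases hza : s.r z a
        · left
          intro x y h
          rw [rec_mid hz hza] at h
          exact mu_sub_rec hV' hw x y h
        · by_cases hwa : s.r w a
          · right
            intro x y h
            rw [rec_mid hw hwa] at h
            exact mu_sub_rec hV' hz x y h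
          · rcases hV'.total (Quotient.mk s z) (Quotient.mk s w) with h | h
            · exact Or.inl ((sub_rec_TT hV' hza hwa).mpr h)
            · exact Or.inr ((sub_rec_TT hV' hwa hza).mpr h)
  · -- bot
    intro x y h
    exact rec_a.mp h
  · exact hrela_rec hV'
  · -- min
    intro z w h
    by_cases hw : w = a
    · subst hw
      rw [rec_a] at h
      subst h
      intro x y hxy; exact hxy
    · by_cases hwa : s.r w a
      · rw [rec_mid hw hwa] at h
        by_cases hz : z = a
        · subst hz; exact a_sub_rec hV'
        · intro x y hxy
          rw [rec_mid hz h] at hxy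
          exact (rec_mid hw hwa).mpr hxy
      · rw [rec_top hwa] at h
        have hsub' := hV'.min (Quotient.mk s z) (Quotient.mk s w) h
        by_cases hz : z = a
        · subst hz; exact a_sub_rec hV'
        · by_cases hza : s.r z a
          · intro x y hxy
            rw [rec_mid hz hza] at hxy
            exact (rec_top hwa).mpr (mu_sub_R' hV' _ hxy)
          · exact (sub_rec_TT hV' hza hwa).mpr hsub'
  · -- split
    intro z w x hguard
    obtain ⟨hg1, hg2, hg3⟩ := hguard
    have hzne : z ≠ a := fun hz => hg2 (by rw [hz]; exact a_sub_rec hV')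
    by_cases hw : w = a
    · -- bottom case
      rw [hw] at hg1 hg2 hg3 ⊢
      have hzmu : ∀ x y, recR s R' a z x y → s.r x y := by
        by_contra hcon
        refine hg3 ⟨z₁, ?_, ?_, ?_, ?_⟩
        · exact a_sub_rec hV'
        · intro x y hxy
          exact mu_sub_rec hV' hzne x y ((rec_mid hz₁a hz₁).mp hxy)
        · intro hsub
          have hr : recR s R' a a z₁ a := hsub z₁ a ((rec_mid hz₁a hz₁).mpr hz₁)
          exact hz₁a (rec_a.mp hr)
        · intro hsub
          exact hcon fun x y hxy => (rec_mid hz₁a hz₁).mp (hsub x y hxy)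
      have hpos : 0 < Nat.card {y // s.r x y} := by rw [hblock x]; omega
      rw [Nat.card_pos_iff] at hpos
      haveI := hpos.1
      haveI := hpos.2
      letI := Fintype.ofFinite {y // s.r x y}
      have hc : Fintype.card {y // s.r x y} = p := by
        rw [← Nat.card_eq_fintype_card, hblock x]
      let e := Fintype.equivFinOfCardEq hc
      refine ⟨fun i => (e.symm i).1, fun i => ?_, fun i j hij => ?_, fun u hu => ?_⟩
      · exact mu_sub_rec hV' hzne x _ (e.symm i).2
      · intro hmem
        rw [rec_a] at hmem
        exact hij (e.symm.injective (Subtype.ext hmem))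
      · refine ⟨e ⟨u, hzmu x u hu⟩, ?_⟩
        rw [rec_a]
        exact congrArg Subtype.val (e.symm_apply_apply ⟨u, _⟩).symm
    · by_cases hwa : s.r w a
      · -- middle case
        have hznr : ¬ s.r z a := by
          intro hza
          exact hg2 fun x y hxy => (rec_mid hw hwa).mpr ((rec_mid hzne hza).mp hxy)
        have hguard' : Guard R' (Quotient.mk s z) (Quotient.mk s a) := by
          refine ⟨?_, ?_, ?_⟩
          · intro r t h
            rw [Ra_iff hV'] at h
            subst h
            exact hV'.refl _ _
          · intro hsub
            refine hg2 fun x y hxy => ?_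
            have h2 := hsub _ _ ((rec_top hznr).mp hxy)
            rw [Ra_iff hV'] at h2
            exact (rec_mid hw hwa).mpr (mk_eq_mk.mp h2)
          · rintro ⟨v, hv1, hv2, hv3, hv4⟩
            have hvnr : ¬ s.r v.out a := by
              intro hva
              refine hv3 ?_
              have hveq : v = Quotient.mk s a := by
                rw [← Quotient.out_eq v]; exact Quotient.sound hva
              rw [hveq]
              intro r t h
              rw [Ra_iff hV'] at h
              subst h
              exact hV'.refl _ _
            refine hg3 ⟨v.out, ?_, ?_, ?_, ?_⟩
            · intro x y hxy
              rw [rec_mid hw hwa] at hxy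
              refine (rec_top hvnr).mpr ?_
              rw [Quotient.out_eq]
              exact mu_sub_R' hV' v hxy
            · intro x y hxy
              rw [rec_top hvnr] at hxy
              rw [Quotient.out_eq] at hxy
              exact (rec_top hznr).mpr (hv2 _ _ hxy)
            · intro hsub
              refine hv3 ?_
              intro r t
              induction r using Quotient.ind with | _ x =>
              induction t using Quotient.ind with | _ y =>
              intro h
              have hx : recR s R' a v.out x y := by
                refine (rec_top hvnr).mpr ?_
                rw [Quotient.out_eq]
                exact h
              have h2 := hsub _ _ hx
              rw [rec_mid hw hwa] at h2
              rw [Ra_iff hV']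
              exact mk_eq_mk.mpr h2
            · intro hsub
              refine hv4 ?_
              rw [← Quotient.out_eq v]
              exact (sub_rec_TT hV' hznr hvnr).mp hsub
        obtain ⟨ybar, m1, m2, m3⟩ :=
          hV'.split (Quotient.mk s z) (Quotient.mk s a) (Quotient.mk s x) hguard'
        refine ⟨fun i => (ybar i).out, fun i => ?_, fun i j hij => ?_, fun u hu => ?_⟩
        · refine (rec_top hznr).mpr ?_
          rw [Quotient.out_eq]
          exact m1 i
        · intro hmem
          rw [rec_mid hw hwa] at hmem
          have hb : ybar i = ybar j := by
            rw [← Quotient.out_eq (ybar i), ← Quotient.out_eq (ybar j)]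
            exact Quotient.sound hmem
          exact m2 i j hij (hb ▸ hV'.refl _ _)
        · have hu' := (rec_top hznr).mp hu
          obtain ⟨i, hi⟩ := m3 (Quotient.mk s u) hu'
          rw [Ra_iff hV'] at hi
          refine ⟨i, (rec_mid hw hwa).mpr ?_⟩
          have hc : Quotient.mk s u = Quotient.mk s ((ybar i).out) := by
            rw [Quotient.out_eq]; exact hi
          exact mk_eq_mk.mp hc
      · -- top case
        have hwne : w ≠ a := hw
        have hznr : ¬ s.r z a := by
          intro hza
          exact hg2 fun x y hxy =>
            mu_sub_rec hV' hwne x y ((rec_mid hzne hza).mp hxy)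
        have hguard' : Guard R' (Quotient.mk s z) (Quotient.mk s w) := by
          refine ⟨(sub_rec_TT hV' hwa hznr).mp hg1,
            fun hsub => hg2 ((sub_rec_TT hV' hznr hwa).mpr hsub), ?_⟩
          rintro ⟨v, hv1, hv2, hv3, hv4⟩
          have hvnr : ¬ s.r v.out a := by
            intro hva
            refine hv3 ?_
            have hveq : v = Quotient.mk s a := by
              rw [← Quotient.out_eq v]; exact Quotient.sound hva
            rw [hveq]
            intro r t h
            rw [Ra_iff hV'] at h
            subst h
            exact hV'.refl _ _
          refine hg3 ⟨v.out, ?_, ?_, ?_, ?_⟩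
          · refine (sub_rec_TT hV' hwa hvnr).mpr ?_
            rw [Quotient.out_eq]; exact hv1
          · refine (sub_rec_TT hV' hvnr hznr).mpr ?_
            rw [Quotient.out_eq]; exact hv2
          · intro hsub
            refine hv3 ?_
            rw [← Quotient.out_eq v]
            exact (sub_rec_TT hV' hvnr hwa).mp hsub
          · intro hsub
            refine hv4 ?_
            rw [← Quotient.out_eq v]
            exact (sub_rec_TT hV' hznr hvnr).mp hsub
        obtain ⟨ybar, m1, m2, m3⟩ :=
          hV'.split (Quotient.mk s z) (Quotient.mk s w) (Quotient.mk s x) hguard'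
        refine ⟨fun i => (ybar i).out, fun i => ?_, fun i j hij => ?_, fun u hu => ?_⟩
        · refine (rec_top hznr).mpr ?_
          rw [Quotient.out_eq]
          exact m1 i
        · intro hmem
          rw [rec_top hwa] at hmem
          rw [Quotient.out_eq, Quotient.out_eq] at hmem
          exact m2 i j hij hmem
        · have hu' := (rec_top hznr).mp hu
          obtain ⟨i, hi⟩ := m3 (Quotient.mk s u) hu'
          refine ⟨i, (rec_top hwa).mpr ?_⟩
          rw [Quotient.out_eq]
          exact hi

end Recon

section Round

variable {p : ℕ} {a : α} {s : Setoid α} {R : α → α → α → Prop}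

lemma penult_unique {s' : Setoid α} (hpen : Penult R s a) (hpen' : Penult R s' a) :
    s = s' := by
  obtain ⟨⟨z₁, hz₁a, hz₁⟩, hmin⟩ := hpen
  obtain ⟨⟨z₂, hz₂a, hz₂⟩, hmin'⟩ := hpen'
  refine Setoid.ext fun x y => ⟨fun h => ?_, fun h => ?_⟩
  · exact (hz₂ x y).mp (hmin z₂ hz₂a x y h)
  · exact (hz₁ x y).mp (hmin' z₁ hz₁a x y h)

lemma exists_penult [Finite α] (hV : Valid p R a) (h2 : 2 ≤ Nat.card α) :
    ∃ s : Setoid α, Penult R s a := by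
  classical
  cases nonempty_fintype α
  have h2' : 1 < Fintype.card α := by rwa [Nat.card_eq_fintype_card] at h2
  obtain ⟨b, hb⟩ := Fintype.exists_ne_of_one_lt_card h2' a
  have hne : Nonempty {z : α // z ≠ a} := ⟨⟨b, hb⟩⟩
  obtain ⟨z₀, hz₀⟩ := exists_bot_of_total (β := {z : α // z ≠ a})
    (fun z w => Sub R z.1 w.1)
    (fun z w => hV.total z.1 w.1)
    (fun z w v h1 h2 x y hxy => h2 x y (h1 x y hxy))
  refine ⟨⟨R z₀.1, ⟨fun x => hV.refl _ _, fun h => hV.symm _ _ _ h,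
    fun h1 h2 => hV.trans _ _ _ _ h1 h2⟩⟩, ⟨⟨z₀.1, z₀.2, fun x y => Iff.rfl⟩, ?_⟩⟩
  exact fun z hz x y h => hz₀ ⟨z, hz⟩ x y h

lemma recon_decomp (hV : Valid p R a) (hpen : Penult R s a) :
    recR s (Rq R s) a = R := by
  funext z x y
  apply propext
  by_cases hz : z = a
  · rw [hz, rec_a]
    exact ⟨fun h => h ▸ hV.refl _ _, fun h => hV.bot _ _ h⟩
  · by_cases hza : s.r z a
    · rw [rec_mid hz hza]
      exact (slice_eq_of_rel hV hpen hz hza x y).symm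
    · rw [rec_top hza, Rq_mk hV hpen, j_eq_of_not hV hpen hza]

lemma decomp_recon {R' : Quotient s → Quotient s → Quotient s → Prop}
    (hV' : Valid p R' (Quotient.mk s a)) (hp2 : 2 ≤ p)
    (hblock : ∀ x, Nat.card {y // s.r x y} = p) :
    Rq (recR s R' a) s = R' := by
  have hVrec := valid_rec hV' hp2 hblock
  have hpenrec := pen_rec hV' hp2 hblock
  funext q r t
  induction q using Quotient.ind with | _ z =>
  induction r using Quotient.ind with | _ x =>
  induction t using Quotient.ind with | _ y =>
  apply propext
  rw [Rq_mk hVrec hpenrec]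
  by_cases hza : s.r z a
  · rw [j_eq_of_rel hVrec hpenrec hza]
    have hz : Quotient.mk s z = Quotient.mk s a := Quotient.sound hza
    rw [hz, Ra_iff hV']
    exact mk_eq_mk.symm
  · rw [j_eq_of_not hVrec hpenrec hza, rec_top hza]

lemma card_quotient (s : Setoid α) [Finite α] {p : ℕ}
    (hblock : ∀ x, Nat.card {y // s.r x y} = p) :
    Nat.card α = Nat.card (Quotient s) * p := by
  classical
  letI := Fintype.ofFinite α
  letI : Fintype (Quotient s) := Fintype.ofFinite _
  letI : ∀ q : Quotient s, Fintype {x : α // Quotient.mk s x = q} :=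
    fun q => Fintype.ofFinite _
  have he : Nat.card α = Nat.card (Σ q : Quotient s, {x : α // Quotient.mk s x = q}) :=
    (Nat.card_congr (Equiv.sigmaFiberEquiv (fun x : α => Quotient.mk s x))).symm
  rw [he, Nat.card_eq_fintype_card, Fintype.card_sigma]
  have hfib : ∀ q : Quotient s, Fintype.card {x : α // Quotient.mk s x = q} = p := by
    intro q
    have he2 : {x : α // Quotient.mk s x = q} ≃ {y : α // s.r q.out y} := by
      refine Equiv.subtypeEquivRight fun x => ?_
      constructor
      · intro h
        have h2 := out_rel s x
        rw [h] at h2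
        exact h2
      · intro h
        exact (Quotient.sound (s.symm h)).trans (Quotient.out_eq q)
    rw [← Nat.card_eq_fintype_card, Nat.card_congr he2, hblock]
  rw [Finset.sum_congr rfl (fun q _ => hfib q), Finset.sum_const, Finset.card_univ,
    Nat.card_eq_fintype_card, smul_eq_mul]

end Round

section Count

instance finiteSetoid (α : Type) [Finite α] : Finite (Setoid α) := by
  refine Finite.of_injective (fun s : Setoid α => s.r) ?_
  intro s t h
  refine Setoid.ext fun x y => ?_
  rw [show s.r = t.r from h]

/-- The type of setoids all of whose blocks have exactly `p` elements. -/
def PB (p : ℕ) (α : Type) : Type := {s : Setoid α // ∀ x, Nat.card {y // s.r x y} = p}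

instance finitePB (p : ℕ) (α : Type) [Finite α] : Finite (PB p α) := by
  unfold PB; infer_instance

variable {p : ℕ}

/-- The block of a fixed element, as a `Finset`. -/
noncomputable def blockOf [Finite α] (x₀ : α) (s : PB p α) :
    {t : Finset α // x₀ ∈ t ∧ t.card = p} := by
  classical
  letI := Fintype.ofFinite α
  refine ⟨Set.toFinset {y | s.1.r x₀ y}, ?_, ?_⟩
  · rw [Set.mem_toFinset]; exact s.1.refl x₀
  · rw [Set.toFinset_card, ← Nat.card_eq_fintype_card]
    exact s.2 x₀

lemma mem_blockOf [Finite α] {x₀ : α} {s : PB p α} {y : α} :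
    y ∈ (blockOf x₀ s).1 ↔ s.1.r x₀ y := by
  classical
  simp [blockOf, Set.mem_toFinset]

/-- Restriction of a `PB` setoid to the complement of the block of `x₀`. -/
noncomputable def restrictPB [Finite α] (x₀ : α) (c : {t : Finset α // x₀ ∈ t ∧ t.card = p})
    (s : PB p α) (hs : blockOf x₀ s = c) : PB p {y : α // y ∉ c.1} := by
  refine ⟨⟨fun u v => s.1.r u.1 v.1, ⟨fun u => s.1.refl _, fun h => s.1.symm h,
    fun h1 h2 => s.1.trans h1 h2⟩⟩, ?_⟩
  intro u
  have he : {v : {y : α // y ∉ c.1} // s.1.r u.1 v.1} ≃ {y : α // s.1.r u.1 y} := by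
    refine ⟨fun v => ⟨v.1.1, v.2⟩, fun y => ⟨⟨y.1, ?_⟩, y.2⟩, fun v => rfl, fun y => rfl⟩
    intro hy
    have hy2 : y.1 ∈ (blockOf x₀ s).1 := by rw [hs]; exact hy
    rw [mem_blockOf] at hy2
    have hx : s.1.r x₀ u.1 := s.1.trans hy2 (s.1.symm y.2)
    have hu2 : u.1 ∈ (blockOf x₀ s).1 := mem_blockOf.mpr hx
    rw [hs] at hu2
    exact u.2 hu2
  exact (Nat.card_congr he).trans (s.2 u.1)

/-- Joining a block containing `x₀` with a `PB` setoid on the complement. -/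
noncomputable def joinPB [Finite α] (x₀ : α) (c : {t : Finset α // x₀ ∈ t ∧ t.card = p})
    (s' : PB p {y : α // y ∉ c.1}) : PB p α := by
  classical
  refine ⟨⟨fun u v => (u ∈ c.1 ∧ v ∈ c.1) ∨
    (∃ (hu : u ∉ c.1) (hv : v ∉ c.1), s'.1.r ⟨u, hu⟩ ⟨v, hv⟩), ⟨?_, ?_, ?_⟩⟩, ?_⟩
  · intro u
    by_cases hu : u ∈ c.1
    · exact Or.inl ⟨hu, hu⟩
    · exact Or.inr ⟨hu, hu, s'.1.refl _⟩
  · intro u v h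
    rcases h with ⟨h1, h2⟩ | ⟨h1, h2, h⟩
    · exact Or.inl ⟨h2, h1⟩
    · exact Or.inr ⟨h2, h1, s'.1.symm h⟩
  · intro u v w h h'
    rcases h with ⟨h1, h2⟩ | ⟨h1, h2, h⟩ <;> rcases h' with ⟨h3, h4⟩ | ⟨h3, h4, hr⟩
    · exact Or.inl ⟨h1, h4⟩
    · exact absurd h2 h3
    · exact absurd h3 h2
    · exact Or.inr ⟨h1, h4, s'.1.trans h hr⟩
  · intro u
    by_cases hu : u ∈ c.1
    · have he : {v // (u ∈ c.1 ∧ v ∈ c.1) ∨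
          (∃ (hu : u ∉ c.1) (hv : v ∉ c.1), s'.1.r ⟨u, hu⟩ ⟨v, hv⟩)} ≃ {v : α // v ∈ c.1} := by
        refine Equiv.subtypeEquivRight fun v => ⟨?_, ?_⟩
        · rintro (⟨_, h⟩ | ⟨h1, _, _⟩)
          · exact h
          · exact absurd hu h1
        · intro h; exact Or.inl ⟨hu, h⟩
      letI := Fintype.ofFinite α
      refine (Nat.card_congr he).trans ?_
      rw [Nat.card_eq_fintype_card, Fintype.card_coe]
      exact c.2.2
    · have he : {v // (u ∈ c.1 ∧ v ∈ c.1) ∨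
          (∃ (hu : u ∉ c.1) (hv : v ∉ c.1), s'.1.r ⟨u, hu⟩ ⟨v, hv⟩)} ≃
          {v : {y : α // y ∉ c.1} // s'.1.r ⟨u, hu⟩ v} := by
        refine ⟨fun v => ⟨⟨v.1, ?_⟩, ?_⟩, fun v => ⟨v.1.1, ?_⟩, fun v => rfl, fun v => rfl⟩
        · rcases v.2 with ⟨h1, _⟩ | ⟨_, h2, _⟩
          · exact absurd h1 hu
          · exact h2
        · rcases v.2 with ⟨h1, _⟩ | ⟨_, h2, h⟩
          · exact absurd h1 hu
          · exact h
        · exact Or.inr ⟨hu, v.1.2, v.2⟩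
      exact (Nat.card_congr he).trans (s'.2 ⟨u, hu⟩)

lemma blockOf_join [Finite α] (x₀ : α) (c : {t : Finset α // x₀ ∈ t ∧ t.card = p})
    (s' : PB p {y : α // y ∉ c.1}) : blockOf x₀ (joinPB x₀ c s') = c := by
  refine Subtype.ext (Finset.ext fun y => ?_)
  rw [mem_blockOf]
  constructor
  · rintro (⟨_, h⟩ | ⟨h1, _, _⟩)
    · exact h
    · exact absurd c.2.1 h1
  · intro h
    exact Or.inl ⟨c.2.1, h⟩

lemma join_restrict [Finite α] (x₀ : α) (c : {t : Finset α // x₀ ∈ t ∧ t.card = p})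
    (s : PB p α) (hs : blockOf x₀ s = c) :
    joinPB x₀ c (restrictPB x₀ c s hs) = s := by
  have hmem : ∀ y, y ∈ c.1 ↔ s.1.r x₀ y := by
    intro y
    rw [← hs, mem_blockOf]
  refine Subtype.ext (Setoid.ext fun u v => ?_)
  show (u ∈ c.1 ∧ v ∈ c.1) ∨ (∃ (hu : u ∉ c.1) (hv : v ∉ c.1), s.1.r u v) ↔ s.1.r u v
  constructor
  · rintro (⟨h1, h2⟩ | ⟨_, _, h⟩)
    · exact s.1.trans (s.1.symm ((hmem u).mp h1)) ((hmem v).mp h2)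
    · exact h
  · intro h
    by_cases hu : u ∈ c.1
    · exact Or.inl ⟨hu, (hmem v).mpr (s.1.trans ((hmem u).mp hu) h)⟩
    · have hv : v ∉ c.1 := fun hv => hu ((hmem u).mpr (s.1.trans ((hmem v).mp hv) (s.1.symm h)))
      exact Or.inr ⟨hu, hv, h⟩

lemma restrict_join [Finite α] (x₀ : α) (c : {t : Finset α // x₀ ∈ t ∧ t.card = p})
    (s' : PB p {y : α // y ∉ c.1}) (hs : blockOf x₀ (joinPB x₀ c s') = c) :
    restrictPB x₀ c (joinPB x₀ c s') hs = s' := by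
  refine Subtype.ext (Setoid.ext fun u v => ?_)
  show (u.1 ∈ c.1 ∧ v.1 ∈ c.1) ∨ (∃ (hu : u.1 ∉ c.1) (hv : v.1 ∉ c.1), s'.1.r ⟨u.1, hu⟩ ⟨v.1, hv⟩)
    ↔ s'.1.r u v
  constructor
  · rintro (⟨h1, _⟩ | ⟨hu, hv, h⟩)
    · exact absurd h1 u.2
    · exact h
  · intro h
    exact Or.inr ⟨u.2, v.2, h⟩

/-- Number of `p`-subsets containing a fixed point. -/
lemma card_csets (α : Type) [Finite α] (x₀ : α) (hp1 : 1 ≤ p) :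
    Nat.card {t : Finset α // x₀ ∈ t ∧ t.card = p}
      = Nat.choose (Nat.card α - 1) (p - 1) := by
  classical
  letI := Fintype.ofFinite α
  have he : {t : Finset α // x₀ ∈ t ∧ t.card = p} ≃
      {t : Finset {y : α // y ≠ x₀} // t.card = p - 1} := by
    refine ⟨fun c => ⟨(c.1.erase x₀).subtype (· ≠ x₀), ?_⟩,
      fun t => ⟨insert x₀ (t.1.map (Function.Embedding.subtype (· ≠ x₀))), ?_, ?_⟩, ?_, ?_⟩
    · rw [Finset.card_subtype, Finset.filter_true_of_mem, Finset.card_erase_of_mem c.2.1, c.2.2]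
      intro y hy
      exact Finset.ne_of_mem_erase hy
    · exact Finset.mem_insert_self _ _
    · rw [Finset.card_insert_of_notMem, Finset.card_map, t.2]
      · omega
      · intro hx
        rw [Finset.mem_map] at hx
        obtain ⟨y, _, hy⟩ := hx
        exact y.2 (by simpa using hy)
    · intro c
      refine Subtype.ext ?_
      show insert x₀ (((c.1.erase x₀).subtype (· ≠ x₀)).map _) = c.1
      rw [Finset.subtype_map, Finset.filter_true_of_mem, Finset.insert_erase c.2.1]
      intro y hy
      exact Finset.ne_of_mem_erase hy
    · intro t
      refine Subtype.ext ?_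
      show ((insert x₀ (t.1.map _)).erase x₀).subtype (· ≠ x₀) = t.1
      rw [Finset.erase_insert]
      · refine Finset.ext fun y => ?_
        rw [Finset.mem_subtype, Finset.mem_map]
        constructor
        · rintro ⟨z, hz, hzy⟩
          have : z = y := Subtype.ext (by simpa using hzy)
          exact this ▸ hz
        · intro hy
          exact ⟨y, hy, rfl⟩
      · intro hx
        rw [Finset.mem_map] at hx
        obtain ⟨y, _, hy⟩ := hx
        exact y.2 (by simpa using hy)
  rw [Nat.card_congr he, Nat.card_eq_fintype_card, Fintype.card_finset_len]
  congr 1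
  rw [Fintype.card_subtype_compl, Fintype.card_subtype_eq, Nat.card_eq_fintype_card]

lemma choose_one_mod (hp : p.Prime) {n : ℕ} (hn : p ∣ n) (hn0 : 0 < n) :
    Nat.choose (n - 1) (p - 1) ≡ 1 [MOD p] := by
  haveI : Fact p.Prime := ⟨hp⟩
  have h := Choose.choose_modEq_choose_mod_mul_choose_div_nat (p := p) (n := n - 1) (k := p - 1)
  have hp2 := hp.two_le
  obtain ⟨m, rfl⟩ := hn
  have hm : 1 ≤ m := by
    by_contra hm
    have : m = 0 := by omega
    subst this
    simp at hn0
  obtain ⟨k, rfl⟩ : ∃ k, m = k + 1 := ⟨m - 1, by omega⟩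
  have e : p * (k + 1) - 1 = p * k + (p - 1) := by
    rw [Nat.mul_succ]
    omega
  have h1 : (p * (k + 1) - 1) % p = p - 1 := by
    rw [e, Nat.mul_add_mod]
    exact Nat.mod_eq_of_lt (by omega)
  have h2 : (p - 1) % p = p - 1 := Nat.mod_eq_of_lt (by omega)
  have h3 : (p - 1) / p = 0 := Nat.div_eq_of_lt (by omega)
  rw [h1, h2, h3] at h
  simpa using h

lemma pb_card_of_empty (p : ℕ) (α : Type) [IsEmpty α] : Nat.card (PB p α) = 1 := by
  rw [Nat.card_eq_one_iff_unique]
  refine ⟨⟨fun s t => Subtype.ext (Setoid.ext fun x => isEmptyElim x)⟩,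
    ⟨⟨fun _ _ => True, ⟨fun _ => trivial, fun {_ _} _ => trivial, fun {_ _ _} _ _ => trivial⟩⟩,
      fun x => isEmptyElim x⟩⟩

lemma count_pb (hp : p.Prime) : ∀ n : ℕ, ∀ (α : Type) [Finite α], Nat.card α = n → p ∣ n →
    Nat.card (PB p α) ≡ 1 [MOD p] := by
  intro n
  induction n using Nat.strong_induction_on with
  | _ n ih =>
  intro α _ hcard hdvd
  classical
  rcases Nat.eq_zero_or_pos n with rfl | hn0
  · haveI : IsEmpty α := by
      rw [Nat.card_eq_zero] at hcard
      rcases hcard with h | h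
      · exact h
      · exact absurd h (by exact fun h' => (not_finite α))
    rw [pb_card_of_empty]
  · haveI hne : Nonempty α := (Nat.card_pos_iff.mp (hcard ▸ hn0)).1
    obtain ⟨x₀⟩ := hne
    letI := Fintype.ofFinite α
    letI : Fintype (PB p α) := Fintype.ofFinite _
    letI : Fintype {t : Finset α // x₀ ∈ t ∧ t.card = p} := Fintype.ofFinite _
    letI : ∀ c : {t : Finset α // x₀ ∈ t ∧ t.card = p},
        Fintype {s : PB p α // blockOf x₀ s = c} := fun c => Fintype.ofFinite _
    have hsig : Nat.card (PB p α) = ∑ c : {t : Finset α // x₀ ∈ t ∧ t.card = p},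
        Nat.card {s : PB p α // blockOf x₀ s = c} := by
      rw [Nat.card_congr (Equiv.sigmaFiberEquiv (blockOf (p := p) x₀)).symm,
        Nat.card_eq_fintype_card, Fintype.card_sigma]
      exact Finset.sum_congr rfl fun c _ => (Nat.card_eq_fintype_card).symm
    have hfib : ∀ c : {t : Finset α // x₀ ∈ t ∧ t.card = p},
        Nat.card {s : PB p α // blockOf x₀ s = c} ≡ 1 [MOD p] := by
      intro c
      have he : {s : PB p α // blockOf x₀ s = c} ≃ PB p {y : α // y ∉ c.1} :=
        ⟨fun s => restrictPB x₀ c s.1 s.2,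
         fun s' => ⟨joinPB x₀ c s', blockOf_join x₀ c s'⟩,
         fun s => Subtype.ext (join_restrict x₀ c s.1 s.2),
         fun s' => restrict_join x₀ c s' _⟩
      rw [Nat.card_congr he]
      have hcc : Nat.card {y : α // y ∉ c.1} = n - p := by
        rw [Nat.card_eq_fintype_card]
        have h2 : Fintype.card {y : α // ¬ y ∈ c.1}
            = Fintype.card α - Fintype.card {y : α // y ∈ c.1} :=
          Fintype.card_subtype_compl _
        rw [h2, Fintype.card_coe, c.2.2, ← Nat.card_eq_fintype_card, hcard]
      have hlt : n - p < n := by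
        have := hp.two_le
        omega
      exact ih (n - p) hlt _ hcc (Nat.dvd_sub hdvd dvd_rfl)
    have hC : Nat.card {t : Finset α // x₀ ∈ t ∧ t.card = p}
        = Nat.choose (n - 1) (p - 1) := by
      rw [card_csets α x₀ hp.one_lt.le, hcard]
    have key : ((Nat.card (PB p α) : ℕ) : ZMod p) = 1 := by
      rw [hsig, Nat.cast_sum]
      have hone : ∀ c : {t : Finset α // x₀ ∈ t ∧ t.card = p},
          ((Nat.card {s : PB p α // blockOf x₀ s = c} : ℕ) : ZMod p) = 1 := by
        intro c
        have := (ZMod.natCast_eq_natCast_iff _ _ _).mpr (hfib c)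
        rwa [Nat.cast_one] at this
      rw [Finset.sum_congr rfl fun c _ => hone c, Finset.sum_const, Finset.card_univ,
        nsmul_eq_mul, mul_one, ← Nat.card_eq_fintype_card, hC]
      have := (ZMod.natCast_eq_natCast_iff _ _ _).mpr (choose_one_mod hp hdvd hn0)
      rwa [Nat.cast_one] at this
    have := (ZMod.natCast_eq_natCast_iff (Nat.card (PB p α)) 1 p).mp (by rwa [Nat.cast_one])
    exact this

end Count

section MainCount

variable {p : ℕ}

lemma valid_count_one (α : Type) [Finite α] (a : α) (h1 : Nat.card α = 1) :
    Nat.card {R : α → α → α → Prop // Valid p R a} = 1 := by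
  haveI hsub : Subsingleton α := (Nat.card_eq_one_iff_unique.mp h1).1
  rw [Nat.card_eq_one_iff_unique]
  constructor
  · refine ⟨fun R S => Subtype.ext (funext fun z => funext fun x => funext fun y => propext ?_)⟩
    have hxy : x = y := Subsingleton.elim x y
    subst hxy
    exact ⟨fun _ => S.2.refl z x, fun _ => R.2.refl z x⟩
  · refine ⟨⟨fun _ _ _ => True, ?_, ?_, ?_, ?_, ?_, ?_, ?_, ?_⟩⟩
    · exact fun _ _ => trivial
    · exact fun _ _ _ _ => trivial
    · exact fun _ _ _ _ _ _ => trivial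
    · exact fun _ _ => Or.inl fun _ _ _ => trivial
    · exact fun x y _ => Subsingleton.elim x y
    · exact fun _ => trivial
    · exact fun _ _ _ _ _ h => h
    · intro z w x hguard
      exact absurd (fun _ _ _ => trivial) hguard.2.1

lemma card_eq_pow_of_valid (hp2 : 2 ≤ p) : ∀ (n : ℕ) (α : Type) [Finite α] (a : α)
    (R : α → α → α → Prop), Nat.card α = n → Valid p R a → ∃ m, n = p ^ m := by
  intro n
  induction n using Nat.strong_induction_on with
  | _ n ih =>
  intro α _ a R hcard hV
  haveI : Nonempty α := ⟨a⟩
  have hnpos : 0 < n := by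
    rw [← hcard]
    exact Nat.card_pos
  by_cases h2 : 2 ≤ n
  · obtain ⟨s, hpen⟩ := exists_penult hV (hcard ▸ h2)
    have hblock := fun x => pen_block hV hpen x
    have hq := card_quotient s hblock
    have hVq := valid_q hV hpen
    haveI hQfin : Finite (Quotient s) := Quotient.finite _
    haveI : Nonempty (Quotient s) := ⟨Quotient.mk s a⟩
    have hQpos : 0 < Nat.card (Quotient s) := Nat.card_pos
    have hlt : Nat.card (Quotient s) < n := by
      rw [← hcard, hq]
      exact (Nat.lt_mul_iff_one_lt_right hQpos).mpr (by omega)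
    obtain ⟨m, hm⟩ := ih _ hlt (Quotient s) (Quotient.mk s a) (Rq R s) rfl hVq
    exact ⟨m + 1, by rw [← hcard, hq, hm, pow_succ]⟩
  · have h1 : n = 1 := by omega
    exact ⟨0, by rw [h1, pow_zero]⟩

lemma count_valid_zero (hp2 : 2 ≤ p) (α : Type) [Finite α] (a : α)
    (h : ¬ ∃ m, Nat.card α = p ^ m) :
    Nat.card {R : α → α → α → Prop // Valid p R a} = 0 := by
  haveI : IsEmpty {R : α → α → α → Prop // Valid p R a} :=
    ⟨fun Rv => h (card_eq_pow_of_valid hp2 (Nat.card α) α a Rv.1 rfl Rv.2)⟩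
  exact Nat.card_of_isEmpty

noncomputable def decFn (p : ℕ) {α : Type} [Finite α] (a : α) (h2 : 2 ≤ Nat.card α)
    (Rv : {R : α → α → α → Prop // Valid p R a}) : PB p α :=
  ⟨Classical.choose (exists_penult Rv.2 h2),
    fun x => pen_block Rv.2 (Classical.choose_spec (exists_penult Rv.2 h2)) x⟩

lemma decFn_pen {α : Type} [Finite α] {a : α} (h2 : 2 ≤ Nat.card α)
    (Rv : {R : α → α → α → Prop // Valid p R a}) :
    Penult Rv.1 (decFn p a h2 Rv).1 a :=
  Classical.choose_spec (exists_penult Rv.2 h2)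

noncomputable def fiberEquiv {α : Type} [Finite α] (a : α) (h2 : 2 ≤ Nat.card α)
    (hp2 : 2 ≤ p) (s : PB p α) :
    {Rv : {R : α → α → α → Prop // Valid p R a} // decFn p a h2 Rv = s}
      ≃ {R' : Quotient s.1 → Quotient s.1 → Quotient s.1 → Prop //
          Valid p R' (Quotient.mk s.1 a)} where
  toFun Rv := ⟨Rq Rv.1.1 s.1, by
    have hpen := decFn_pen h2 Rv.1
    rw [show (decFn p a h2 Rv.1).1 = s.1 from congrArg Subtype.val Rv.2] at hpen
    exact valid_q Rv.1.2 hpen⟩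
  invFun R' := ⟨⟨recR s.1 R'.1 a, valid_rec R'.2 hp2 s.2⟩, by
    refine Subtype.ext (penult_unique (decFn_pen h2 _) (pen_rec R'.2 hp2 s.2))⟩
  left_inv Rv := by
    have hpen := decFn_pen h2 Rv.1
    rw [show (decFn p a h2 Rv.1).1 = s.1 from congrArg Subtype.val Rv.2] at hpen
    exact Subtype.ext (Subtype.ext (recon_decomp Rv.1.2 hpen))
  right_inv R' := Subtype.ext (decomp_recon R'.2 hp2 s.2)

lemma count_valid (hp : p.Prime) : ∀ (m : ℕ) (α : Type) [Finite α] (a : α),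
    Nat.card α = p ^ m →
    Nat.card {R : α → α → α → Prop // Valid p R a} ≡ 1 [MOD p] := by
  intro m
  induction m with
  | zero =>
      intro α _ a h
      rw [pow_zero] at h
      rw [valid_count_one α a h]
  | succ m ih =>
      intro α _ a hcard
      classical
      have hp2 := hp.two_le
      have h2 : 2 ≤ Nat.card α := by
        rw [hcard]
        calc 2 ≤ p := hp2
        _ ≤ p ^ (m + 1) := Nat.le_self_pow (by omega) p
      letI := Fintype.ofFinite α
      letI : Fintype (PB p α) := Fintype.ofFinite _
      letI : Fintype {R : α → α → α → Prop // Valid p R a} := Fintype.ofFinite _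
      letI : ∀ s : PB p α,
          Fintype {Rv : {R : α → α → α → Prop // Valid p R a} // decFn p a h2 Rv = s} :=
        fun _ => Fintype.ofFinite _
      have hsig : Nat.card {R : α → α → α → Prop // Valid p R a} = ∑ s : PB p α,
          Nat.card {Rv : {R : α → α → α → Prop // Valid p R a} // decFn p a h2 Rv = s} := by
        rw [Nat.card_congr (Equiv.sigmaFiberEquiv (decFn p a h2)).symm,
          Nat.card_eq_fintype_card, Fintype.card_sigma]
        exact Finset.sum_congr rfl fun c _ => (Nat.card_eq_fintype_card).symm
      have hfib : ∀ s : PB p α,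
          Nat.card {Rv : {R : α → α → α → Prop // Valid p R a} // decFn p a h2 Rv = s}
            ≡ 1 [MOD p] := by
        intro s
        rw [Nat.card_congr (fiberEquiv a h2 hp2 s)]
        haveI : Finite (Quotient s.1) := Quotient.finite _
        have hq := card_quotient s.1 s.2
        have hQcard : Nat.card (Quotient s.1) = p ^ m := by
          have : Nat.card (Quotient s.1) * p = p ^ m * p := by
            rw [← hq, hcard, pow_succ]
          exact Nat.eq_of_mul_eq_mul_right hp.pos this
        exact ih (Quotient s.1) (Quotient.mk s.1 a) hQcard
      have hpb : Nat.card (PB p α) ≡ 1 [MOD p] :=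
        count_pb hp (p ^ (m + 1)) α hcard (dvd_pow_self p (Nat.succ_ne_zero m))
      have key : ((Nat.card {R : α → α → α → Prop // Valid p R a} : ℕ) : ZMod p) = 1 := by
        rw [hsig, Nat.cast_sum]
        have hone : ∀ s : PB p α,
            ((Nat.card {Rv : {R : α → α → α → Prop // Valid p R a} //
              decFn p a h2 Rv = s} : ℕ) : ZMod p) = 1 := by
          intro s
          have := (ZMod.natCast_eq_natCast_iff _ _ _).mpr (hfib s)
          rwa [Nat.cast_one] at this
        rw [Finset.sum_congr rfl fun s _ => hone s, Finset.sum_const, Finset.card_univ,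
          nsmul_eq_mul, mul_one, ← Nat.card_eq_fintype_card]
        have := (ZMod.natCast_eq_natCast_iff _ _ _).mpr hpb
        rwa [Nat.cast_one] at this
      exact (ZMod.natCast_eq_natCast_iff _ 1 p).mp (by rwa [Nat.cast_one])

end MainCount



abbrev L3 : Language := cLang 1 rels3

def r3 : L3.Relations 3 := (0 : Fin 1)

def c0 : L3.Constants := (0 : Fin 1)

/-- The curried ternary relation of an `L3`-structure. -/
def R3M (M : Type) [L3.Structure M] : M → M → M → Prop := fun a b c =>
  Structure.RelMap (L := L3) (M := M) r3 ![a, b, c]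

/-- The interpretation of the constant. -/
def cM (M : Type) [L3.Structure M] : M :=
  Structure.funMap (L := L3) (M := M) (c0 : L3.Functions 0) default

variable {V : Type}

def atom (t1 t2 t3 : L3.Term V) : L3.Formula V :=
  Relations.formula r3 ![t1, t2, t3]

lemma realize_atom {M : Type} [L3.Structure M] {v : V → M} {t1 t2 t3 : L3.Term V} :
    (atom t1 t2 t3).Realize v ↔ R3M M (t1.realize v) (t2.realize v) (t3.realize v) := by
  rw [atom, Formula.realize_rel]
  unfold R3M
  have he : (fun i => Term.realize v (![t1, t2, t3] i))
      = ![t1.realize v, t2.realize v, t3.realize v] := by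
    funext i
    fin_cases i <;> rfl
  rw [he]

noncomputable def fAlls {W : Type} [Finite W] (φ : L3.Formula (V ⊕ W)) : L3.Formula V :=
  Formula.iAlls W φ

noncomputable def fExs {W : Type} [Finite W] (φ : L3.Formula (V ⊕ W)) : L3.Formula V :=
  Formula.iExs W φ

lemma realize_fAlls {W : Type} [Finite W] {φ : L3.Formula (V ⊕ W)} {M : Type}
    [L3.Structure M] {v : V → M} :
    (fAlls φ).Realize v ↔ ∀ i : W → M, φ.Realize (Sum.elim v i) := by
  rw [fAlls, Formula.realize_iAlls]

lemma realize_fExs {W : Type} [Finite W] {φ : L3.Formula (V ⊕ W)} {M : Type}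
    [L3.Structure M] {v : V → M} :
    (fExs φ).Realize v ↔ ∃ i : W → M, φ.Realize (Sum.elim v i) := by
  rw [fExs, Formula.realize_iExs]

def fconj : List (L3.Formula V) → L3.Formula V
  | [] => ⊤
  | φ :: rest => φ ⊓ fconj rest

lemma realize_fconj {l : List (L3.Formula V)} {M : Type} [L3.Structure M] {v : V → M} :
    (fconj l).Realize v ↔ ∀ φ ∈ l, φ.Realize v := by
  induction l with
  | nil => simp [fconj]
  | cons φ rest ih => simp [fconj, Formula.realize_inf, ih]

def fdisj : List (L3.Formula V) → L3.Formula V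
  | [] => ⊥
  | φ :: rest => φ ⊔ fdisj rest

lemma realize_fdisj {l : List (L3.Formula V)} {M : Type} [L3.Structure M] {v : V → M} :
    (fdisj l).Realize v ↔ ∃ φ ∈ l, φ.Realize v := by
  induction l with
  | nil => simp [fdisj]
  | cons φ rest ih => simp [fdisj, Formula.realize_sup, ih]

def fconjFin {k : ℕ} (g : Fin k → L3.Formula V) : L3.Formula V :=
  fconj ((List.finRange k).map g)

lemma realize_fconjFin {k : ℕ} {g : Fin k → L3.Formula V} {M : Type} [L3.Structure M]
    {v : V → M} : (fconjFin g).Realize v ↔ ∀ i, (g i).Realize v := by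
  rw [fconjFin, realize_fconj]
  simp

def fdisjFin {k : ℕ} (g : Fin k → L3.Formula V) : L3.Formula V :=
  fdisj ((List.finRange k).map g)

lemma realize_fdisjFin {k : ℕ} {g : Fin k → L3.Formula V} {M : Type} [L3.Structure M]
    {v : V → M} : (fdisjFin g).Realize v ↔ ∃ i, (g i).Realize v := by
  rw [fdisjFin, realize_fdisj]
  simp


/-- `Sub` as a formula. -/
noncomputable def subT (z w : L3.Term V) : L3.Formula V :=
  fAlls (W := Fin 2)
    ((atom (z.relabel Sum.inl) (Term.var (Sum.inr 0)) (Term.var (Sum.inr 1))).imp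
      (atom (w.relabel Sum.inl) (Term.var (Sum.inr 0)) (Term.var (Sum.inr 1))))

lemma realize_subT {M : Type} [L3.Structure M] {v : V → M} {z w : L3.Term V} :
    (subT z w).Realize v ↔ Sub (R3M M) (z.realize v) (w.realize v) := by
  rw [subT, realize_fAlls]
  constructor
  · intro h x y hxy
    have h2 := h ![x, y]
    rw [Formula.realize_imp, realize_atom, realize_atom] at h2
    simp only [Term.realize_relabel, Term.realize_var, Sum.elim_inl, Sum.elim_inr,
      Matrix.cons_val_zero, Matrix.cons_val_one, Matrix.head_cons] at h2
    have h3 : Term.realize (Sum.elim v ![x, y] ∘ Sum.inl) z = Term.realize v z := by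
      rw [Sum.elim_comp_inl]
    rw [h3] at h2
    have h4 : Term.realize (Sum.elim v ![x, y] ∘ Sum.inl) w = Term.realize v w := by
      rw [Sum.elim_comp_inl]
    rw [h4] at h2
    exact h2 hxy
  · intro h i
    rw [Formula.realize_imp, realize_atom, realize_atom]
    simp only [Term.realize_relabel, Term.realize_var, Sum.elim_inl, Sum.elim_inr,
      Sum.elim_comp_inl]
    exact h (i 0) (i 1)

/-- `Guard` as a formula. -/
noncomputable def guardT (z w : L3.Term V) : L3.Formula V :=
  subT w z ⊓ (subT z w).not ⊓
    (fExs (W := Fin 1)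
      (subT (w.relabel Sum.inl) (Term.var (Sum.inr 0)) ⊓
       subT (Term.var (Sum.inr 0)) (z.relabel Sum.inl) ⊓
       (subT (Term.var (Sum.inr 0)) (w.relabel Sum.inl)).not ⊓
       (subT (z.relabel Sum.inl) (Term.var (Sum.inr 0))).not)).not

lemma realize_guardT {M : Type} [L3.Structure M] {v : V → M} {z w : L3.Term V} :
    (guardT z w).Realize v ↔ Guard (R3M M) (z.realize v) (w.realize v) := by
  rw [guardT]
  rw [Formula.realize_inf, Formula.realize_inf, Formula.realize_not, Formula.realize_not,
    realize_fExs, realize_subT, realize_subT]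
  unfold Guard
  rw [and_assoc]
  refine and_congr_right fun _ => and_congr_right fun _ => not_congr ?_
  constructor
  · rintro ⟨i, hi⟩
    rw [Formula.realize_inf, Formula.realize_inf, Formula.realize_inf,
      Formula.realize_not, Formula.realize_not, realize_subT, realize_subT,
      realize_subT, realize_subT] at hi
    simp only [Term.realize_relabel, Term.realize_var, Sum.elim_inr, Sum.elim_comp_inl] at hi
    exact ⟨i 0, hi.1.1.1, hi.1.1.2, hi.1.2, hi.2⟩
  · rintro ⟨u, h1, h2, h3, h4⟩
    refine ⟨fun _ => u, ?_⟩
    rw [Formula.realize_inf, Formula.realize_inf, Formula.realize_inf,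
      Formula.realize_not, Formula.realize_not, realize_subT, realize_subT,
      realize_subT, realize_subT]
    simp only [Term.realize_relabel, Term.realize_var, Sum.elim_inr, Sum.elim_comp_inl]
    exact ⟨⟨⟨h1, h2⟩, h3⟩, h4⟩

/-- `ExactP` as a formula. -/
noncomputable def exactT (p : ℕ) (z w x : L3.Term V) : L3.Formula V :=
  fExs (W := Fin p)
    (fconjFin (fun i : Fin p =>
        atom (z.relabel Sum.inl) (x.relabel Sum.inl) (Term.var (Sum.inr i))) ⊓
     fconjFin (fun i : Fin p => fconjFin (fun j : Fin p =>
        if i = j then ⊤ else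
          (atom (w.relabel Sum.inl) (Term.var (Sum.inr i)) (Term.var (Sum.inr j))).not)) ⊓
     fAlls (W := Fin 1)
       ((atom ((z.relabel Sum.inl).relabel Sum.inl) ((x.relabel Sum.inl).relabel Sum.inl)
          (Term.var (Sum.inr 0))).imp
        (fdisjFin (fun i : Fin p =>
          atom ((w.relabel Sum.inl).relabel Sum.inl) (Term.var (Sum.inr 0))
            (Term.var (Sum.inl (Sum.inr i)))))))

lemma realize_exactT {p : ℕ} {M : Type} [L3.Structure M] {v : V → M} {z w x : L3.Term V} :
    (exactT p z w x).Realize v ↔ ExactP p (R3M M) (z.realize v) (w.realize v) (x.realize v) := by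
  rw [exactT, realize_fExs]
  unfold ExactP
  refine exists_congr fun yv => ?_
  rw [Formula.realize_inf, Formula.realize_inf, realize_fconjFin, realize_fconjFin,
    realize_fAlls]
  constructor
  · rintro ⟨⟨h1, h2⟩, h3⟩
    refine ⟨?_, ?_, ?_⟩
    · intro i
      have := h1 i
      rw [realize_atom] at this
      simpa only [Term.realize_relabel, Term.realize_var, Sum.elim_inr,
        Sum.elim_comp_inl] using this
    · intro i j hij
      have := (realize_fconjFin).mp (h2 i) j
      rw [if_neg hij, Formula.realize_not, realize_atom] at this
      simpa only [Term.realize_relabel, Term.realize_var, Sum.elim_inr,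
        Sum.elim_comp_inl] using this
    · intro u hu
      have := h3 ![u]
      rw [Formula.realize_imp, realize_atom, realize_fdisjFin] at this
      simp only [Term.realize_relabel, Term.realize_var, Sum.elim_inr, Sum.elim_inl,
        Sum.elim_comp_inl, Matrix.cons_val_zero] at this
      obtain ⟨i, hi⟩ := this hu
      rw [realize_atom] at hi
      simp only [Term.realize_relabel, Term.realize_var, Sum.elim_inr, Sum.elim_inl,
        Sum.elim_comp_inl, Matrix.cons_val_zero] at hi
      exact ⟨i, hi⟩
  · rintro ⟨h1, h2, h3⟩
    refine ⟨⟨?_, ?_⟩, ?_⟩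
    · intro i
      rw [realize_atom]
      simp only [Term.realize_relabel, Term.realize_var, Sum.elim_inr, Sum.elim_comp_inl]
      exact h1 i
    · intro i
      rw [realize_fconjFin]
      intro j
      by_cases hij : i = j
      · rw [if_pos hij]
        exact Formula.realize_top.mpr trivial
      · rw [if_neg hij, Formula.realize_not, realize_atom]
        simp only [Term.realize_relabel, Term.realize_var, Sum.elim_inr, Sum.elim_comp_inl]
        exact h2 i j hij
    · intro i
      rw [Formula.realize_imp, realize_atom, realize_fdisjFin]
      simp only [Term.realize_relabel, Term.realize_var, Sum.elim_inr, Sum.elim_inl,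
        Sum.elim_comp_inl]
      intro hu
      obtain ⟨j, hj⟩ := h3 (i 0) hu
      refine ⟨j, ?_⟩
      rw [realize_atom]
      simp only [Term.realize_relabel, Term.realize_var, Sum.elim_inr, Sum.elim_inl,
        Sum.elim_comp_inl]
      exact hj


def ct : L3.Term V := Constants.term c0

lemma realize_ct {M : Type} [L3.Structure M] {v : V → M} : (ct : L3.Term V).realize v = cM M := by
  rw [ct, Term.realize_constants]
  rfl

section Axioms

noncomputable def ax1 : L3.Sentence :=
  fAlls (V := Empty) (W := Fin 2) (atom (Term.var (Sum.inr 0)) (Term.var (Sum.inr 1)) (Term.var (Sum.inr 1)))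

noncomputable def ax2 : L3.Sentence :=
  fAlls (V := Empty) (W := Fin 3)
    ((atom (Term.var (Sum.inr 0)) (Term.var (Sum.inr 1)) (Term.var (Sum.inr 2))).imp
      (atom (Term.var (Sum.inr 0)) (Term.var (Sum.inr 2)) (Term.var (Sum.inr 1))))

noncomputable def ax3 : L3.Sentence :=
  fAlls (V := Empty) (W := Fin 4)
    ((atom (Term.var (Sum.inr 0)) (Term.var (Sum.inr 1)) (Term.var (Sum.inr 2))).imp
      ((atom (Term.var (Sum.inr 0)) (Term.var (Sum.inr 2)) (Term.var (Sum.inr 3))).imp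
        (atom (Term.var (Sum.inr 0)) (Term.var (Sum.inr 1)) (Term.var (Sum.inr 3)))))

noncomputable def ax4 : L3.Sentence :=
  fAlls (V := Empty) (W := Fin 2)
    (subT (Term.var (Sum.inr 0)) (Term.var (Sum.inr 1)) ⊔
      subT (Term.var (Sum.inr 1)) (Term.var (Sum.inr 0)))

noncomputable def ax5 : L3.Sentence :=
  fAlls (V := Empty) (W := Fin 2)
    ((atom ct (Term.var (Sum.inr 0)) (Term.var (Sum.inr 1))).imp
      (Term.equal (Term.var (Sum.inr 0)) (Term.var (Sum.inr 1))))

noncomputable def ax6 : L3.Sentence :=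
  fAlls (V := Empty) (W := Fin 1)
    (atom (Term.var (Sum.inr 0)) (Term.var (Sum.inr 0)) ct)

noncomputable def ax7 : L3.Sentence :=
  fAlls (V := Empty) (W := Fin 2)
    ((atom (Term.var (Sum.inr 1)) (Term.var (Sum.inr 0)) ct).imp
      (subT (Term.var (Sum.inr 0)) (Term.var (Sum.inr 1))))

noncomputable def ax9 (p : ℕ) : L3.Sentence :=
  fAlls (V := Empty) (W := Fin 3)
    ((guardT (Term.var (Sum.inr 0)) (Term.var (Sum.inr 1))).imp
      (exactT p (Term.var (Sum.inr 0)) (Term.var (Sum.inr 1)) (Term.var (Sum.inr 2))))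

noncomputable def phi (p : ℕ) : L3.Sentence :=
  ax1 ⊓ ax2 ⊓ ax3 ⊓ ax4 ⊓ ax5 ⊓ ax6 ⊓ ax7 ⊓ ax9 p

variable {M : Type} [L3.Structure M]

lemma realize_ax1 : M ⊨ ax1 ↔ ∀ z x, R3M M z x x := by
  rw [Sentence.Realize, ax1, realize_fAlls]
  constructor
  · intro h z x
    have := h ![z, x]
    rw [realize_atom] at this
    simpa using this
  · intro h i
    rw [realize_atom]
    exact h (i 0) (i 1)

lemma realize_ax2 : M ⊨ ax2 ↔ ∀ z x y, R3M M z x y → R3M M z y x := by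
  rw [Sentence.Realize, ax2, realize_fAlls]
  constructor
  · intro h z x y
    have := h ![z, x, y]
    rw [Formula.realize_imp, realize_atom, realize_atom] at this
    simpa using this
  · intro h i
    rw [Formula.realize_imp, realize_atom, realize_atom]
    exact h (i 0) (i 1) (i 2)

lemma realize_ax3 : M ⊨ ax3 ↔ ∀ z x y u, R3M M z x y → R3M M z y u → R3M M z x u := by
  rw [Sentence.Realize, ax3, realize_fAlls]
  constructor
  · intro h z x y u
    have := h ![z, x, y, u]
    rw [Formula.realize_imp, Formula.realize_imp, realize_atom, realize_atom,
      realize_atom] at this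
    simpa using this
  · intro h i
    rw [Formula.realize_imp, Formula.realize_imp, realize_atom, realize_atom, realize_atom]
    exact h (i 0) (i 1) (i 2) (i 3)

lemma realize_ax4 : M ⊨ ax4 ↔ ∀ z w, Sub (R3M M) z w ∨ Sub (R3M M) w z := by
  rw [Sentence.Realize, ax4, realize_fAlls]
  constructor
  · intro h z w
    have := h ![z, w]
    rw [Formula.realize_sup, realize_subT, realize_subT] at this
    simpa using this
  · intro h i
    rw [Formula.realize_sup, realize_subT, realize_subT]
    exact h (i 0) (i 1)

lemma realize_ax5 : M ⊨ ax5 ↔ ∀ x y, R3M M (cM M) x y → x = y := by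
  rw [Sentence.Realize, ax5, realize_fAlls]
  constructor
  · intro h x y
    have := h ![x, y]
    rw [Formula.realize_imp, realize_atom, Formula.realize_equal, realize_ct] at this
    simpa using this
  · intro h i
    rw [Formula.realize_imp, realize_atom, Formula.realize_equal, realize_ct]
    exact h (i 0) (i 1)

lemma realize_ax6 : M ⊨ ax6 ↔ ∀ z, R3M M z z (cM M) := by
  rw [Sentence.Realize, ax6, realize_fAlls]
  constructor
  · intro h z
    have := h ![z]
    rw [realize_atom, realize_ct] at this
    simpa using this
  · intro h i
    rw [realize_atom, realize_ct]
    exact h (i 0)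

lemma realize_ax7 : M ⊨ ax7 ↔ ∀ z w, R3M M w z (cM M) → Sub (R3M M) z w := by
  rw [Sentence.Realize, ax7, realize_fAlls]
  constructor
  · intro h z w
    have := h ![z, w]
    rw [Formula.realize_imp, realize_atom, realize_subT, realize_ct] at this
    simpa using this
  · intro h i
    rw [Formula.realize_imp, realize_atom, realize_subT, realize_ct]
    exact h (i 0) (i 1)

lemma realize_ax9 {p : ℕ} :
    M ⊨ ax9 p ↔ ∀ z w x, Guard (R3M M) z w → ExactP p (R3M M) z w x := by
  rw [Sentence.Realize, ax9, realize_fAlls]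
  constructor
  · intro h z w x
    have := h ![z, w, x]
    rw [Formula.realize_imp, realize_guardT, realize_exactT] at this
    simpa using this
  · intro h i
    rw [Formula.realize_imp, realize_guardT, realize_exactT]
    exact h (i 0) (i 1) (i 2)

theorem realize_phi {p : ℕ} : M ⊨ phi p ↔ Valid p (R3M M) (cM M) := by
  have hsplit : (M ⊨ phi p) ↔ (M ⊨ ax1 ∧ M ⊨ ax2 ∧ M ⊨ ax3 ∧ M ⊨ ax4 ∧ M ⊨ ax5 ∧
      M ⊨ ax6 ∧ M ⊨ ax7 ∧ M ⊨ ax9 p) := by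
    unfold phi Sentence.Realize
    simp only [Formula.realize_inf]
    tauto
  rw [hsplit, realize_ax1, realize_ax2, realize_ax3, realize_ax4, realize_ax5,
    realize_ax6, realize_ax7, realize_ax9]
  constructor
  · rintro ⟨h1, h2, h3, h4, h5, h6, h7, h9⟩
    exact ⟨h1, h2, h3, h4, h5, h6, h7, h9⟩
  · rintro ⟨h1, h2, h3, h4, h5, h6, h7, h9⟩
    exact ⟨h1, h2, h3, h4, h5, h6, h7, h9⟩

end Axioms



section Glue

def mkS {n : ℕ} (R : Fin n → Fin n → Fin n → Prop) :
    ∀ k, rels3 k → (Fin k → Fin n) → Prop := fun k =>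
  match k with
  | 0 => fun r _ => r.elim
  | 1 => fun r _ => r.elim
  | 2 => fun r _ => r.elim
  | 3 => fun _ v => R (v 0) (v 1) (v 2)
  | (_ + 4) => fun r _ => r.elim

lemma gCount_zero (p : ℕ) : gCount (phi p) 0 = 0 := by
  haveI : IsEmpty { pr : (∀ k, rels3 k → (Fin k → Fin 0) → Prop) × (Fin 1 → Fin 0) //
      ((pr.2 0 : ℕ) + 1 = 0) ∧
      (letI := cLang.mkStructure pr.2 pr.1
       Fin 0 ⊨ phi p) } := ⟨fun pr => (pr.1.2 0).elim0⟩
  exact Nat.card_of_isEmpty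

lemma gCount_eq (p : ℕ) (n : ℕ) (hn : 1 ≤ n) :
    gCount (phi p) n = Nat.card {R : Fin n → Fin n → Fin n → Prop //
      Valid p R ⟨n - 1, by omega⟩} := by
  apply Nat.card_congr
  refine ⟨fun pr => ⟨fun a b c => pr.1.1 3 (0 : Fin 1) ![a, b, c], ?_⟩,
    fun R => ⟨(mkS R.1, fun _ => ⟨n - 1, by omega⟩), ?_, ?_⟩, ?_, ?_⟩
  · obtain ⟨h1, h2⟩ := pr.2
    letI := cLang.mkStructure pr.1.2 pr.1.1
    have hv := (realize_phi (M := Fin n) (p := p)).mp h2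
    have hv' : Valid p (fun a b c => pr.1.1 3 (0 : Fin 1) ![a, b, c]) (pr.1.2 0) := hv
    have hc : pr.1.2 0 = (⟨n - 1, by omega⟩ : Fin n) := by
      apply Fin.ext
      rw [show ((⟨n - 1, by omega⟩ : Fin n) : ℕ) = n - 1 from rfl]
      omega
    rwa [hc] at hv'
  · show (n - 1) + 1 = n
    omega
  · letI := cLang.mkStructure (fun _ : Fin 1 => (⟨n - 1, by omega⟩ : Fin n)) (mkS R.1)
    show Fin n ⊨ phi p
    apply (realize_phi (M := Fin n) (p := p)).mpr
    exact R.2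
  · intro pr
    refine Subtype.ext (Prod.ext ?_ ?_)
    · funext k r v
      match k with
      | 0 => exact r.elim
      | 1 => exact r.elim
      | 2 => exact r.elim
      | (m + 4) => exact r.elim
      | 3 =>
        show pr.1.1 3 (0 : Fin 1) ![v 0, v 1, v 2] = pr.1.1 3 r v
        have hr : r = (0 : Fin 1) := Subsingleton.elim (α := Fin 1) r 0
        subst hr
        have hv : ![v 0, v 1, v 2] = v := by
          funext i
          fin_cases i <;> rfl
        exact congrArg _ hv
    · funext i
      have hi : i = 0 := Subsingleton.elim _ _
      subst hi
      apply Fin.ext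
      have := pr.2.1
      show ((n : ℕ) - 1) = _
      omega
  · intro R
    refine Subtype.ext ?_
    funext a b c
    rfl

end Glue

end Cex

/-- **Ternary relation counterexample for every prime p.**
For every prime p there is a first-order sentence φ_p over the vocabulary with one
constant symbol and one ternary relation symbol such that g_p(n) = 0 whenever n is not
a power of p, and g_p(n) ≡ 1 (mod p) whenever n = p^m.  In particular n ↦ g_p(n) mod p
is not ultimately periodic. -/
theorem ternary_counterexample_with_constant_prime (p : ℕ) (hp : p.Prime) :
    ∃ φ : (cLang 1 rels3).Sentence,
      (∀ n : ℕ, (¬ ∃ m : ℕ, n = p ^ m) → gCount φ n = 0) ∧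
      (∀ m : ℕ, gCount φ (p ^ m) ≡ 1 [MOD p]) ∧
      (¬ ∃ r q : ℕ, 1 ≤ q ∧ ∀ n : ℕ, r ≤ n → gCount φ (n + q) ≡ gCount φ n [MOD p]) := by
  classical
  have hp2 := hp.two_le
  refine ⟨Cex.phi p, ?_, ?_, ?_⟩
  case _ =>
    intro n hnp
    rcases Nat.eq_zero_or_pos n with rfl | hn
    · exact Cex.gCount_zero p
    · rw [Cex.gCount_eq p n hn]
      apply Cex.count_valid_zero hp2
      intro ⟨m, hm⟩
      rw [Nat.card_eq_fintype_card, Fintype.card_fin] at hm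
      exact hnp ⟨m, hm⟩
  case _ =>
    intro m
    have hn : 1 ≤ p ^ m := Nat.one_le_pow m p (by omega)
    rw [Cex.gCount_eq p (p ^ m) hn]
    exact Cex.count_valid hp m (Fin (p ^ m)) _
      (by rw [Nat.card_eq_fintype_card, Fintype.card_fin])
  case _ =>
    rintro ⟨r, q, hq, hper⟩
    set N := r + q with hN
    have hNlt : N < p ^ N := Nat.lt_pow_self (n := N) (by omega)
    have hr : r ≤ p ^ N := by omega
    have h1 : gCount (Cex.phi p) (p ^ N) ≡ 1 [MOD p] := by
      rw [Cex.gCount_eq p (p ^ N) (Nat.one_le_pow N p (by omega))]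
      exact Cex.count_valid hp N (Fin (p ^ N)) _
        (by rw [Nat.card_eq_fintype_card, Fintype.card_fin])
    have h0 : gCount (Cex.phi p) (p ^ N + q) = 0 := by
      have hpow : ¬ ∃ m : ℕ, p ^ N + q = p ^ m := by
        rintro ⟨m, hm⟩
        have hgt : p ^ N < p ^ m := by omega
        have hmN : N < m := (Nat.pow_lt_pow_iff_right (by omega)).mp hgt
        have hge : p ^ (N + 1) ≤ p ^ m := Nat.pow_le_pow_right (by omega) (by omega)
        have h2N : p ^ N + q < p ^ (N + 1) := by
          have : p ^ (N + 1) = p ^ N * p := by rw [pow_succ]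
          have h2 : p ^ N * 2 ≤ p ^ N * p := Nat.mul_le_mul_left _ hp2
          omega
        omega
      rw [Cex.gCount_eq p (p ^ N + q) (by omega)]
      apply Cex.count_valid_zero hp2
      intro ⟨m, hm⟩
      rw [Nat.card_eq_fintype_card, Fintype.card_fin] at hm
      exact hpow ⟨m, hm⟩
    have hper' := hper (p ^ N) hr
    rw [h0] at hper'
    have : (1 : ℕ) ≡ 0 [MOD p] := h1.symm.trans hper'.symm
    have h1m : (1 : ℕ) % p = 1 := Nat.mod_eq_of_lt (by omega)
    have h0m : (0 : ℕ) % p = 0 := Nat.zero_mod p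
    rw [Nat.ModEq, h1m, h0m] at this
    omega
end
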